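/- Write the combinatorial Brianchon–Gram function of a Φ-tope τ ⊆ c(Φ) in the basis of quadrant monomials: X(Φ,τ) = Σ_{B ⊆ {1,…,N}} z(Φ,τ,B) ∏_{i∉B} p_i ∏_{i∈B} q_i with integer coefficients z(Φ,τ,B). Then: (i) z(Φ,τ,∅) = 1 and z(Φ,τ,{1,…,N}) = (−1)^{N−r}; (ii) if z(Φ,τ,B) ≠ 0, then the cone c(Φ_flip^B) is salient. -/

import Mathlib

open scoped Pointwise
open Classical MvPolynomial

noncomputable section

namespace AC

section Defs

variable {E : Type*} [AddCommGroup E] [Module ℝ E]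
variable {ι : Type*} [Fintype ι] [DecidableEq ι]

/-- Characteristic function of a set, with values in `ℝ`. -/
def charFn {α : Type*} (s : Set α) (x : α) : ℝ := if x ∈ s then 1 else 0

/-- The cone of nonnegative linear combinations of `{Ψ i : i ∈ I}`. -/
def coneOf (Ψ : ι → E) (I : Set ι) : Set E :=
  {v | ∃ c : ι → ℝ, (∀ i, 0 ≤ c i) ∧ (∀ i, i ∉ I → c i = 0) ∧ v = ∑ i, c i • Ψ i}

/-- The cone of nonnegative linear combinations of all the `Ψ i`. -/
def fullCone (Ψ : ι → E) : Set E := coneOf Ψ Set.univ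

/-- A cone is salient if it contains no line, i.e. `v, -v ∈ C → v = 0`. -/
def Salient (C : Set E) : Prop := ∀ v ∈ C, -v ∈ C → v = 0

/-- A wall: a hyperplane spanned by `dim E - 1` linearly independent members of `Ψ`. -/
def IsWall (Ψ : ι → E) (H : Submodule ℝ E) : Prop :=
  ∃ S : Finset ι, S.card + 1 = Module.finrank ℝ E ∧
    LinearIndependent ℝ (fun i : {x // x ∈ S} => Ψ i.1) ∧
    H = Submodule.span ℝ (Ψ '' ↑S)

/-- An element is regular when it lies on no wall. -/
def IsRegular (Ψ : ι → E) (μ : E) : Prop :=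
  ∀ H : Submodule ℝ E, IsWall Ψ H → μ ∉ H

/-- `G(Ψ,τ)`: generating subsets whose cone contains `τ`. -/
def Gens (Ψ : ι → E) (τ : Set E) : Set (Finset ι) :=
  {I | Submodule.span ℝ (Ψ '' ↑I) = ⊤ ∧ τ ⊆ coneOf Ψ ↑I}

/-- `I` is basic when `{Ψ i : i ∈ I}` is a basis of `E`. -/
def IsBasic (Ψ : ι → E) (I : Finset ι) : Prop :=
  LinearIndependent ℝ (fun i : {x // x ∈ I} => Ψ i.1) ∧
    Submodule.span ℝ (Ψ '' ↑I) = ⊤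

/-- `B(Ψ,τ)`: basic subsets whose cone contains `τ`. -/
def Bases (Ψ : ι → E) (τ : Set E) : Set (Finset ι) :=
  {I | IsBasic Ψ I ∧ τ ⊆ coneOf Ψ ↑I}

/-- The combinatorial Brianchon-Gram polynomial `X(Ψ,τ)`; the variable `Sum.inl i`
plays the role of `p i` and `Sum.inr i` plays the role of `q i`. -/
def BGpoly (Ψ : ι → E) (τ : Set E) : MvPolynomial (ι ⊕ ι) ℤ :=
  ∑ I : Finset ι,
    if I ∈ Gens Ψ τ then
      (-1 : MvPolynomial (ι ⊕ ι) ℤ) ^ (I.card - Module.finrank ℝ E) *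
        ((∏ j ∈ Iᶜ, X (Sum.inl j)) * ∏ i ∈ I, (X (Sum.inl i) + X (Sum.inr i)))
    else 0

/-- The geometric Brianchon-Gram function `X_geom(Ψ,τ)` on `ℝ^ι`. -/
def XGeom (Ψ : ι → E) (τ : Set E) (x : ι → ℝ) : ℝ :=
  ∑ I : Finset ι,
    if I ∈ Gens Ψ τ then
      (-1 : ℝ) ^ (I.card - Module.finrank ℝ E) *
        ∏ j ∈ Iᶜ, (if 0 ≤ x j then (1 : ℝ) else 0)
    else 0

/-- The affine subspace `V(Ψ,λ)`. -/
def affSlice (Ψ : ι → E) (lam : E) : Set (ι → ℝ) := {x | ∑ i, x i • Ψ i = lam}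

/-- The partition polytope `p(Ψ,λ)`. -/
def partPoly (Ψ : ι → E) (lam : E) : Set (ι → ℝ) :=
  {x | (∀ i, 0 ≤ x i) ∧ ∑ i, x i • Ψ i = lam}

/-- The semi-closed quadrant `Q_neg^B`. -/
def Qneg (B : Finset ι) : Set (ι → ℝ) :=
  {x | (∀ i ∈ B, x i < 0) ∧ ∀ i ∉ B, 0 ≤ x i}

/-- The flipped sequence `Ψ_flip^B`. -/
def flipSeq (Ψ : ι → E) (B : Finset ι) : ι → E := fun i => if i ∈ B then -Ψ i else Ψ i

/-- The zonotope `b(Ψ)`. -/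
def zonotope (Ψ : ι → E) : Set E :=
  {v | ∃ t : ι → ℝ, (∀ i, 0 ≤ t i ∧ t i ≤ 1) ∧ v = ∑ i, t i • Ψ i}

/-- `x ∈ ℝ^ι` is a lattice point when all its coordinates are integers. -/
def isLatticePt (x : ι → ℝ) : Prop := ∀ i, ∃ n : ℤ, x i = (n : ℝ)

/-- `v` lies in the open side of the hyperplane `H` containing `τ`. -/
def InOpenSideOf (H : Submodule ℝ E) (τ : Set E) (v : E) : Prop :=
  ∃ ξ : E →ₗ[ℝ] ℝ, (∀ h ∈ H, ξ h = 0) ∧ (∀ μ ∈ τ, 0 < ξ μ) ∧ 0 < ξ v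

/-- The change of variables exchanging `p i` and `q i` for `i ∈ A`. -/
def flipVar (A : Finset ι) : ι ⊕ ι → ι ⊕ ι
  | Sum.inl i => if i ∈ A then Sum.inr i else Sum.inl i
  | Sum.inr i => if i ∈ A then Sum.inl i else Sum.inr i

/-- The ring map `Flip_A`, exchanging `p i` and `q i` for `i ∈ A`. -/
def FlipPoly (A : Finset ι) (P : MvPolynomial (ι ⊕ ι) ℤ) : MvPolynomial (ι ⊕ ι) ℤ :=
  MvPolynomial.rename (flipVar A) P

/-- Value substituted for the variable `p i` in the substitution `Geom_A`. -/
def geomValA (A : Finset ι) (x : ι → ℝ) : ι → ℝ := fun i =>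
  if i ∈ A then (if 0 < x i then 1 else 0) else (if 0 ≤ x i then 1 else 0)

/-- The substitution `Geom_A`: substitute `1 - p i` for `q i`, then `[x i ≥ 0]`
for `p i` if `i ∉ A`, and `[x i > 0]` for `p i` if `i ∈ A`. -/
def GeomA (A : Finset ι) (P : MvPolynomial (ι ⊕ ι) ℤ) (x : ι → ℝ) : ℝ :=
  MvPolynomial.aeval (Sum.elim (geomValA A x) (fun i => 1 - geomValA A x i)) P

/-- The substitution `Geom`: `[x i ≥ 0]` for `p i`, `[x i < 0]` for `q i`. -/
def Geom (P : MvPolynomial (ι ⊕ ι) ℤ) (x : ι → ℝ) : ℝ := GeomA ∅ P x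

/-- The semi-closed flipped partition polytope `p_flip(Ψ,A,λ)`. -/
def pflip (Ψ : ι → E) (A : Finset ι) (lam : E) : Set (ι → ℝ) :=
  {x | (∑ i, x i • Ψ i = lam) ∧ (∀ i ∈ A, x i < 0) ∧ ∀ i ∉ A, 0 ≤ x i}

/-- The linear map `x ↦ ∑ i, x i • Ψ i`. -/
def Mmap (Ψ : ι → E) : (ι → ℝ) →ₗ[ℝ] E where
  toFun x := ∑ i, x i • Ψ i
  map_add' x y := by simp [add_smul, Finset.sum_add_distrib]
  map_smul' c x := by simp [smul_smul, Finset.smul_sum]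

/-- A polynomial function on a finite-dimensional real vector space. -/
def IsPolynomialFun {W : Type*} [AddCommGroup W] [Module ℝ W] (f : W → ℝ) : Prop :=
  ∃ (n : ℕ) (b : Module.Basis (Fin n) ℝ W) (p : MvPolynomial (Fin n) ℝ),
    ∀ v, f v = MvPolynomial.eval (fun i => b.repr v i) p

/-- `Λ` is a (full) lattice in `W`: the ℤ-span of some ℝ-basis. -/
def IsLattice {W : Type*} [AddCommGroup W] [Module ℝ W] (Λ : AddSubgroup W) : Prop :=
  ∃ b : Module.Basis (Fin (Module.finrank ℝ W)) ℝ W,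
    ∀ v, v ∈ Λ ↔ ∀ i, ∃ n : ℤ, b.repr v i = (n : ℝ)

/-- Quasi-polynomial function on the lattice `Λ`: polynomial on each coset of
a finite-index sublattice (here `D • Λ`). -/
def IsQuasiPolynomialOn {W : Type*} [AddCommGroup W] [Module ℝ W]
    (Λ : AddSubgroup W) (f : W → ℝ) : Prop :=
  ∃ D : ℕ, 0 < D ∧ ∀ lam₀ ∈ Λ, ∃ P : W → ℝ, IsPolynomialFun P ∧
    ∀ lam' ∈ Λ, f (lam₀ + D • lam') = P (lam₀ + D • lam')

end Defs

section Topes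

variable {E : Type*} [AddCommGroup E] [Module ℝ E] [TopologicalSpace E]
variable {ι : Type*} [Fintype ι]

/-- A tope: a connected component of the set of regular elements. -/
def IsTope (Ψ : ι → E) (τ : Set E) : Prop :=
  ∃ μ, IsRegular Ψ μ ∧ τ = connectedComponentIn {x | IsRegular Ψ x} μ

/-- Two topes are adjacent along the wall `H` when the intersection of their
closures is contained in `H` and spans `H`. -/
def Adjacent (Ψ : ι → E) (τ₁ τ₂ : Set E) (H : Submodule ℝ E) : Prop :=
  IsTope Ψ τ₁ ∧ IsTope Ψ τ₂ ∧ τ₁ ≠ τ₂ ∧ IsWall Ψ H ∧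
    closure τ₁ ∩ closure τ₂ ⊆ (H : Set E) ∧
    Submodule.span ℝ (closure τ₁ ∩ closure τ₂) = H

end Topes
section BGwork
set_option linter.unusedSectionVars false

variable {F : Type*} [NormedAddCommGroup F] [NormedSpace ℝ F] [FiniteDimensional ℝ F]
variable {N : ℕ}

lemma mem_coneOf_finset {Φ : Fin N → F} {I : Finset (Fin N)} {v : F} :
    v ∈ coneOf Φ ↑I ↔
      ∃ y : Fin N → ℝ, (∀ i, 0 ≤ y i) ∧ (∀ i ∉ I, y i = 0) ∧ v = ∑ i, y i • Φ i := by
  constructor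
  · rintro ⟨y, h1, h2, h3⟩; exact ⟨y, h1, fun i hi => h2 i (by simpa using hi), h3⟩
  · rintro ⟨y, h1, h2, h3⟩; exact ⟨y, h1, fun i hi => h2 i (by simpa using hi), h3⟩

lemma coneOf_mono {Φ : Fin N → F} {s t : Set (Fin N)} (h : s ⊆ t) :
    coneOf Φ s ⊆ coneOf Φ t := by
  rintro v ⟨y, h1, h2, h3⟩
  exact ⟨y, h1, fun i hi => h2 i (fun hs => hi (h hs)), h3⟩

lemma mem_span_of_mem_coneOf {Φ : Fin N → F} {I : Finset (Fin N)} {v : F}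
    (hv : v ∈ coneOf Φ ↑I) : v ∈ Submodule.span ℝ (Φ '' ↑I) := by
  rw [mem_coneOf_finset] at hv
  obtain ⟨y, -, h0, rfl⟩ := hv
  refine Submodule.sum_mem _ (fun i _ => ?_)
  by_cases hi : i ∈ I
  · exact Submodule.smul_mem _ _ (Submodule.subset_span ⟨i, by simpa using hi, rfl⟩)
  · simp [h0 i hi]

/-- The basis attached to a basic subset. -/
noncomputable def bas (Φ : Fin N → F) {J : Finset (Fin N)} (hJ : IsBasic Φ J) :
    Module.Basis {x // x ∈ J} ℝ F :=
  Module.Basis.mk hJ.1 (by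
    have h : Set.range (fun i : {x // x ∈ J} => Φ i.1) = Φ '' ↑J := by
      rw [Set.image_eq_range]; rfl
    rw [h, hJ.2])

lemma bas_apply {Φ : Fin N → F} {J : Finset (Fin N)} (hJ : IsBasic Φ J)
    (j : {x // x ∈ J}) : bas Φ hJ j = Φ j.1 := by
  rw [bas, Module.Basis.mk_apply]

lemma card_of_isBasic {Φ : Fin N → F} {J : Finset (Fin N)} (hJ : IsBasic Φ J) :
    J.card = Module.finrank ℝ F := by
  rw [Module.finrank_eq_card_basis (bas Φ hJ), Fintype.card_coe]

/-- Coordinates in the basis `bas Φ hJ`, as a function on all of `Fin N`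
(zero outside `J`). -/
noncomputable def coordv (Φ : Fin N → F) {J : Finset (Fin N)} (hJ : IsBasic Φ J)
    (v : F) : Fin N → ℝ :=
  fun i => if h : i ∈ J then (bas Φ hJ).repr v ⟨i, h⟩ else 0

lemma coordv_of_not_mem {Φ : Fin N → F} {J : Finset (Fin N)} (hJ : IsBasic Φ J)
    (v : F) {i : Fin N} (h : i ∉ J) : coordv Φ hJ v i = 0 := dif_neg h

lemma coordv_of_mem {Φ : Fin N → F} {J : Finset (Fin N)} (hJ : IsBasic Φ J)
    (v : F) {i : Fin N} (h : i ∈ J) : coordv Φ hJ v i = (bas Φ hJ).repr v ⟨i, h⟩ :=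
  dif_pos h

lemma sum_coordv {Φ : Fin N → F} {J : Finset (Fin N)} (hJ : IsBasic Φ J) (v : F) :
    ∑ i, coordv Φ hJ v i • Φ i = v := by
  have h1 : ∑ i, coordv Φ hJ v i • Φ i = ∑ i ∈ J, coordv Φ hJ v i • Φ i := by
    refine (Finset.sum_subset (Finset.subset_univ J) (fun i _ hi => ?_)).symm
    rw [coordv_of_not_mem hJ v hi, zero_smul]
  rw [h1, ← Finset.sum_attach J (fun i => coordv Φ hJ v i • Φ i)]
  have h2 : ∀ j : {x // x ∈ J}, coordv Φ hJ v j.1 • Φ j.1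
      = (bas Φ hJ).repr v j • (bas Φ hJ) j := by
    intro j
    rw [coordv_of_mem hJ v j.2, bas_apply]
  calc ∑ j ∈ J.attach, coordv Φ hJ v j.1 • Φ j.1
      = ∑ j : {x // x ∈ J}, (bas Φ hJ).repr v j • (bas Φ hJ) j := by
        rw [Finset.univ_eq_attach]; exact Finset.sum_congr rfl (fun j _ => h2 j)
    _ = v := (bas Φ hJ).sum_repr v

lemma coordv_unique {Φ : Fin N → F} {J : Finset (Fin N)} (hJ : IsBasic Φ J)
    {v : F} {y : Fin N → ℝ} (h0 : ∀ i ∉ J, y i = 0) (hy : ∑ i, y i • Φ i = v) :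
    y = coordv Φ hJ v := by
  set z : Fin N → ℝ := fun i => y i - coordv Φ hJ v i with hz
  have hzsum : ∑ i, z i • Φ i = 0 := by
    simp only [hz, sub_smul, Finset.sum_sub_distrib, hy, sum_coordv hJ v, sub_self]
  have hz0 : ∀ i, z i = 0 := by
    have hzJ : ∀ i ∉ J, z i = 0 := fun i hi => by
      simp [hz, h0 i hi, coordv_of_not_mem hJ v hi]
    have hsum2 : ∑ j : {x // x ∈ J}, z j.1 • Φ j.1 = 0 := by
      rw [Finset.univ_eq_attach, Finset.sum_attach J (fun i => z i • Φ i)]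
      rw [← hzsum]
      exact Finset.sum_subset (Finset.subset_univ J)
        (fun i _ hi => by rw [hzJ i hi, zero_smul])
    have hind := Fintype.linearIndependent_iff.mp hJ.1
    intro i
    by_cases hi : i ∈ J
    · exact hind (fun j => z j.1) hsum2 ⟨i, hi⟩
    · exact hzJ i hi
  funext i
  have := hz0 i
  simp only [hz] at this
  linarith
end BGwork
section BGwork2
set_option linter.unusedSectionVars false
variable {F : Type*} [NormedAddCommGroup F] [NormedSpace ℝ F] [FiniteDimensional ℝ F]
variable {N : ℕ}

/-- The linear functional `γ_J` determined by `γ_J (Φ j) = c j` for `j ∈ J`. -/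
noncomputable def gammaB (Φ : Fin N → F) (c : Fin N → ℝ) {J : Finset (Fin N)}
    (hJ : IsBasic Φ J) : F →ₗ[ℝ] ℝ :=
  ∑ j : {x // x ∈ J}, c j.1 • (bas Φ hJ).coord j

lemma gammaB_apply (Φ : Fin N → F) (c : Fin N → ℝ) {J : Finset (Fin N)}
    (hJ : IsBasic Φ J) (v : F) :
    gammaB Φ c hJ v = ∑ j : {x // x ∈ J}, c j.1 * (bas Φ hJ).repr v j := by
  rw [gammaB]
  simp [Module.Basis.coord_apply]

lemma gammaB_phi_mem (Φ : Fin N → F) (c : Fin N → ℝ) {J : Finset (Fin N)}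
    (hJ : IsBasic Φ J) {j : Fin N} (hj : j ∈ J) : gammaB Φ c hJ (Φ j) = c j := by
  rw [gammaB_apply]
  have h1 : Φ j = bas Φ hJ ⟨j, hj⟩ := (bas_apply hJ ⟨j, hj⟩).symm
  rw [h1]
  have : ∀ j' : {x // x ∈ J},
      ((bas Φ hJ).repr (bas Φ hJ ⟨j, hj⟩)) j' = if j' = ⟨j, hj⟩ then 1 else 0 := by
    intro j'
    rw [Module.Basis.repr_self, Finsupp.single_apply]
    simp [eq_comm]
  simp only [this, mul_ite, mul_one, mul_zero]
  simp

/-- Reduced cost of index `k` relative to the basic set `J`. -/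
noncomputable def rcost (Φ : Fin N → F) (c : Fin N → ℝ) {J : Finset (Fin N)}
    (hJ : IsBasic Φ J) (k : Fin N) : ℝ :=
  c k - gammaB Φ c hJ (Φ k)

lemma rcost_of_mem (Φ : Fin N → F) (c : Fin N → ℝ) {J : Finset (Fin N)}
    (hJ : IsBasic Φ J) {j : Fin N} (hj : j ∈ J) : rcost Φ c hJ j = 0 := by
  rw [rcost, gammaB_phi_mem Φ c hJ hj, sub_self]

/-- The key reduced-cost identity. -/
lemma key_identity (Φ : Fin N → F) (c : Fin N → ℝ) {J : Finset (Fin N)}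
    (hJ : IsBasic Φ J) {v : F} {y : Fin N → ℝ} (hy : ∑ i, y i • Φ i = v) :
    ∑ i, y i * c i = gammaB Φ c hJ v + ∑ i, y i * rcost Φ c hJ i := by
  have h1 : gammaB Φ c hJ v = ∑ i, y i * gammaB Φ c hJ (Φ i) := by
    rw [← hy, map_sum]
    exact Finset.sum_congr rfl (fun i _ => by rw [map_smul, smul_eq_mul])
  have h2 : ∀ i : Fin N, y i * rcost Φ c hJ i = y i * c i - y i * gammaB Φ c hJ (Φ i) := by
    intro i; rw [rcost]; ring
  have h3 : ∑ i, y i * rcost Φ c hJ i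
      = ∑ i, y i * c i - ∑ i, y i * gammaB Φ c hJ (Φ i) := by
    rw [← Finset.sum_sub_distrib]
    exact Finset.sum_congr rfl (fun i _ => h2 i)
  rw [h1, h3]
  ring

lemma coordv_nonneg (Φ : Fin N → F) {J : Finset (Fin N)} (hJ : IsBasic Φ J)
    {lam : F} (hc : lam ∈ coneOf Φ ↑J) (i : Fin N) : 0 ≤ coordv Φ hJ lam i := by
  rw [mem_coneOf_finset] at hc
  obtain ⟨y, h1, h2, h3⟩ := hc
  rw [← coordv_unique hJ h2 h3.symm]
  exact h1 i

lemma coordv_ne_zero (Φ : Fin N → F) {J : Finset (Fin N)} (hJ : IsBasic Φ J)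
    {x : F} (hreg : IsRegular Φ x) {i : Fin N} (hi : i ∈ J) :
    coordv Φ hJ x i ≠ 0 := by
  intro h0
  set S : Finset (Fin N) := J.erase i with hS
  have hxspan : x ∈ Submodule.span ℝ (Φ '' ↑S) := by
    have hx : ∑ i' ∈ S, coordv Φ hJ x i' • Φ i' = x := by
      conv_rhs => rw [← sum_coordv hJ x]
      refine Finset.sum_subset (Finset.subset_univ S) (fun i' _ hi' => ?_)
      by_cases hiJ : i' ∈ J
      · have : i' = i := by
          by_contra hne
          exact hi' (Finset.mem_erase.mpr ⟨hne, hiJ⟩)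
        rw [this, h0, zero_smul]
      · rw [coordv_of_not_mem hJ x hiJ, zero_smul]
    rw [← hx]
    refine Submodule.sum_mem _ (fun i' hi' => ?_)
    exact Submodule.smul_mem _ _ (Submodule.subset_span ⟨i', by simpa using hi', rfl⟩)
  have hwall : IsWall Φ (Submodule.span ℝ (Φ '' ↑S)) := by
    refine ⟨S, ?_, ?_, rfl⟩
    · rw [hS, Finset.card_erase_of_mem hi, card_of_isBasic hJ,
        Nat.sub_add_cancel]
      have : 0 < J.card := Finset.card_pos.mpr ⟨i, hi⟩
      rw [card_of_isBasic hJ] at this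
      omega
    · have hinj : Function.Injective
          (fun j : {x // x ∈ S} => (⟨j.1, Finset.mem_of_mem_erase j.2⟩ : {x // x ∈ J})) := by
        intro a b hab
        exact Subtype.ext (by simpa using hab)
      exact hJ.1.comp _ hinj
  exact hreg _ hwall hxspan

lemma coordv_pos (Φ : Fin N → F) {J : Finset (Fin N)} (hJ : IsBasic Φ J)
    {lam : F} (hreg : IsRegular Φ lam) (hc : lam ∈ coneOf Φ ↑J) {i : Fin N}
    (hi : i ∈ J) : 0 < coordv Φ hJ lam i :=
  lt_of_le_of_ne (coordv_nonneg Φ hJ hc i) (Ne.symm (coordv_ne_zero Φ hJ hreg hi))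

end BGwork2
section BGwork3
set_option linter.unusedSectionVars false
set_option maxHeartbeats 1000000
variable {F : Type*} [NormedAddCommGroup F] [NormedSpace ℝ F] [FiniteDimensional ℝ F]
variable {N : ℕ}

lemma isBasic_of_span_card {Φ : Fin N → F} {J : Finset (Fin N)}
    (hspan : Submodule.span ℝ (Φ '' ↑J) = ⊤) (hcard : J.card = Module.finrank ℝ F) :
    IsBasic Φ J := by
  have htop : ⊤ ≤ Submodule.span ℝ (Set.range fun i : {x // x ∈ J} => Φ i.1) := by
    have h : Set.range (fun i : {x // x ∈ J} => Φ i.1) = Φ '' ↑J := by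
      rw [Set.image_eq_range]; rfl
    rw [h, hspan]
  have hc : Fintype.card {x // x ∈ J} = Module.finrank ℝ F := by
    rw [Fintype.card_coe, hcard]
  have hli := (basisOfTopLeSpanOfCardEqFinrank _ htop hc).linearIndependent
  rw [coe_basisOfTopLeSpanOfCardEqFinrank] at hli
  exact ⟨hli, hspan⟩

lemma gammaB_of_rep (Φ : Fin N → F) (c : Fin N → ℝ) {J : Finset (Fin N)}
    (hJ : IsBasic Φ J) {v : F} {y : Fin N → ℝ} (hsupp : ∀ i ∉ J, y i = 0)
    (hy : ∑ i, y i • Φ i = v) :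
    gammaB Φ c hJ v = ∑ i, y i * c i := by
  have h := key_identity Φ c hJ hy
  have h2 : ∑ i, y i * rcost Φ c hJ i = 0 := by
    refine Finset.sum_eq_zero (fun i _ => ?_)
    by_cases hi : i ∈ J
    · rw [rcost_of_mem Φ c hJ hi, mul_zero]
    · rw [hsupp i hi, zero_mul]
  rw [h, h2, add_zero]

/-- The simplex pivot step: a negative reduced cost yields a strictly better
capturing basis inside `J ∪ {k}`. -/
lemma pivot (Φ : Fin N → F) (c : Fin N → ℝ) (a : F →ₗ[ℝ] ℝ) (ha : ∀ i, 0 < a (Φ i))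
    {lam : F} (hreg : IsRegular Φ lam) {J : Finset (Fin N)} (hJ : IsBasic Φ J)
    (hcap : lam ∈ coneOf Φ ↑J) {k : Fin N} (hk : k ∉ J)
    (hrk : rcost Φ c hJ k < 0) :
    ∃ (J' : Finset (Fin N)) (hJ' : IsBasic Φ J'), J' ⊆ insert k J ∧
      lam ∈ coneOf Φ ↑J' ∧ gammaB Φ c hJ' lam < gammaB Φ c hJ lam := by
  classical
  set q : Fin N → ℝ := coordv Φ hJ lam with hq
  set α : Fin N → ℝ := coordv Φ hJ (Φ k) with hα
  have hq0 : ∀ i, 0 ≤ q i := coordv_nonneg Φ hJ hcap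
  have hqpos : ∀ i ∈ J, 0 < q i := fun i hi => coordv_pos Φ hJ hreg hcap hi
  have hαk : α k = 0 := coordv_of_not_mem hJ (Φ k) hk
  have hα0 : ∀ i ∉ J, α i = 0 := fun i hi => coordv_of_not_mem hJ (Φ k) hi
  have hqk : q k = 0 := coordv_of_not_mem hJ lam hk
  set δ : Fin N → ℝ := fun i => (if i = k then (1:ℝ) else 0) - α i with hδ
  have hδk : δ k = 1 := by rw [hδ]; simp [hαk]
  have hδne : ∀ i, i ≠ k → δ i = -α i := by
    intro i hik; rw [hδ]; simp [hik]
  have hqzero : ∀ i ∉ J, q i = 0 := fun i hi => coordv_of_not_mem hJ lam hi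
  have hδsum : ∑ i, δ i • Φ i = 0 := by
    have h1 : ∑ i, δ i • Φ i
        = ∑ i, ((if i = k then (1:ℝ) else 0) • Φ i) - ∑ i, α i • Φ i := by
      rw [← Finset.sum_sub_distrib]
      exact Finset.sum_congr rfl (fun i _ => by rw [hδ, sub_smul])
    have h2 : ∑ i, ((if i = k then (1:ℝ) else 0) • Φ i) = Φ k := by
      rw [Finset.sum_congr rfl
        (fun i _ => show (if i = k then (1:ℝ) else 0) • Φ i
          = if i = k then Φ i else 0 by split <;> simp)]
      rw [Finset.sum_ite_eq' Finset.univ k Φ]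
      simp
    rw [h1, h2, sum_coordv hJ (Φ k), sub_self]
  have hysum : ∀ t : ℝ, ∑ i, (q i + t * δ i) • Φ i = lam := by
    intro t
    have : ∀ i, (q i + t * δ i) • Φ i = q i • Φ i + t • (δ i • Φ i) := by
      intro i; rw [add_smul, smul_smul]
    rw [Finset.sum_congr rfl (fun i _ => this i), Finset.sum_add_distrib,
      ← Finset.smul_sum, hδsum, smul_zero, add_zero, sum_coordv hJ lam]
  -- the entering direction is bounded thanks to salience
  have hTne : (J.filter (fun j => 0 < α j)).Nonempty := by
    by_contra hT
    have hαle : ∀ i, α i ≤ 0 := by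
      intro i
      by_cases hiJ : i ∈ J
      · by_contra hpos
        exact hT ⟨i, Finset.mem_filter.mpr ⟨hiJ, lt_of_not_ge hpos⟩⟩
      · rw [hα0 i hiJ]
    have halam : 0 ≤ a lam := by
      have : a lam = ∑ i, q i * a (Φ i) := by
        rw [← sum_coordv hJ lam, map_sum]
        exact Finset.sum_congr rfl (fun i _ => by rw [map_smul, smul_eq_mul])
      rw [this]
      exact Finset.sum_nonneg (fun i _ => mul_nonneg (hq0 i) (le_of_lt (ha i)))
    set t₀ : ℝ := a lam / a (Φ k) + 1 with ht₀
    have ht₀pos : 0 < t₀ := by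
      have := div_nonneg halam (le_of_lt (ha k))
      rw [ht₀]; linarith
    have hy0 : ∀ i, 0 ≤ q i + t₀ * δ i := by
      intro i
      by_cases hik : i = k
      · subst hik
        rw [hδk]; linarith [hq0 i]
      · rw [hδne i hik]
        nlinarith [hq0 i, hαle i]
    have hbound : (q k + t₀ * δ k) * a (Φ k) ≤ a lam := by
      have h1 : a lam = ∑ i, (q i + t₀ * δ i) * a (Φ i) := by
        rw [← hysum t₀, map_sum]
        exact Finset.sum_congr rfl (fun i _ => by rw [map_smul, smul_eq_mul])
      rw [h1]
      exact Finset.single_le_sum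
        (f := fun i => (q i + t₀ * δ i) * a (Φ i))
        (fun i _ => mul_nonneg (hy0 i) (le_of_lt (ha i))) (Finset.mem_univ k)
    rw [hδk, hqk] at hbound
    have h2 : t₀ * a (Φ k) = a lam + a (Φ k) := by
      rw [ht₀]; field_simp [ne_of_gt (ha k)]
    nlinarith [ha k]
  obtain ⟨j₀, hj₀T, hmin⟩ := Finset.exists_min_image _ (fun j => q j / α j) hTne
  have hj₀J : j₀ ∈ J := (Finset.mem_filter.mp hj₀T).1
  have hαj₀ : 0 < α j₀ := (Finset.mem_filter.mp hj₀T).2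
  have hj₀k : j₀ ≠ k := fun h => hk (h ▸ hj₀J)
  set t : ℝ := q j₀ / α j₀ with ht
  have htpos : 0 < t := div_pos (hqpos _ hj₀J) hαj₀
  set y : Fin N → ℝ := fun i => q i + t * δ i with hy
  have hy0 : ∀ i, 0 ≤ y i := by
    intro i
    show 0 ≤ q i + t * δ i
    by_cases hik : i = k
    · subst hik
      rw [hδk]; linarith [hq0 i]
    · rw [hδne i hik]
      rcases lt_trichotomy (α i) 0 with h | h | h
      · nlinarith [hq0 i]
      · rw [h]; simpa using hq0 i
      · have hiJ : i ∈ J := by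
          by_contra hiJ; rw [hα0 i hiJ] at h; exact lt_irrefl _ h
        have hle : t * α i ≤ q i :=
          (le_div_iff₀ h).mp (hmin i (Finset.mem_filter.mpr ⟨hiJ, h⟩))
        nlinarith
  have hyj₀ : y j₀ = 0 := by
    show q j₀ + t * δ j₀ = 0
    rw [hδne j₀ hj₀k, ht]
    field_simp
    ring
  set J' : Finset (Fin N) := insert k (J.erase j₀) with hJ'def
  have hkJ' : k ∈ J' := Finset.mem_insert_self _ _
  have heraseJ' : J.erase j₀ ⊆ J' := Finset.subset_insert _ _
  have hysupp : ∀ i ∉ J', y i = 0 := by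
    intro i hi
    have hik : i ≠ k := fun h => hi (h ▸ hkJ')
    have hie : i ∉ J.erase j₀ := fun h => hi (heraseJ' h)
    have hδi : δ i = -α i := by simp [hδ, hik]
    by_cases hiJ : i ∈ J
    · have : i = j₀ := by
        by_contra hne
        exact hie (Finset.mem_erase.mpr ⟨hne, hiJ⟩)
      rw [this]; exact hyj₀
    · show q i + t * δ i = 0
      rw [hδi, hα0 i hiJ, hqzero i hiJ]
      ring
  have hcardJ' : J'.card = Module.finrank ℝ F := by
    rw [hJ'def, Finset.card_insert_of_notMem (fun h => hk (Finset.mem_of_mem_erase h)),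
      Finset.card_erase_of_mem hj₀J]
    have h1 : 0 < J.card := Finset.card_pos.mpr ⟨j₀, hj₀J⟩
    rw [card_of_isBasic hJ] at h1 ⊢
    omega
  have hspanJ' : Submodule.span ℝ (Φ '' ↑J') = ⊤ := by
    have hmemJ' : ∀ i ∈ J', Φ i ∈ Submodule.span ℝ (Φ '' ↑J') :=
      fun i hi => Submodule.subset_span ⟨i, by simpa using hi, rfl⟩
    have hsumJ : ∑ i ∈ J, α i • Φ i = Φ k := by
      conv_rhs => rw [← sum_coordv hJ (Φ k)]
      exact Finset.sum_subset (Finset.subset_univ J)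
        (fun i _ hi => by rw [hα0 i hi, zero_smul])
    have hsplit : α j₀ • Φ j₀ + ∑ i ∈ J.erase j₀, α i • Φ i = Φ k := by
      rw [Finset.add_sum_erase J (fun i => α i • Φ i) hj₀J]; exact hsumJ
    have hφj₀ : Φ j₀ ∈ Submodule.span ℝ (Φ '' ↑J') := by
      have h1 : Φ j₀ = (α j₀)⁻¹ • (Φ k - ∑ i ∈ J.erase j₀, α i • Φ i) := by
        have h0 : α j₀ • Φ j₀ = Φ k - ∑ i ∈ J.erase j₀, α i • Φ i :=
          eq_sub_of_add_eq hsplit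
        rw [← h0, inv_smul_smul₀ (ne_of_gt hαj₀)]
      rw [h1]
      refine Submodule.smul_mem _ _ (Submodule.sub_mem _ (hmemJ' k hkJ') ?_)
      refine Submodule.sum_mem _ (fun i hi => ?_)
      exact Submodule.smul_mem _ _ (hmemJ' i (heraseJ' hi))
    have hJle : Submodule.span ℝ (Φ '' ↑J) ≤ Submodule.span ℝ (Φ '' ↑J') := by
      rw [Submodule.span_le]
      rintro v ⟨i, hi, rfl⟩
      have hiJ : i ∈ J := by simpa using hi
      by_cases hij₀ : i = j₀
      · rw [hij₀]; exact hφj₀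
      · exact hmemJ' i (heraseJ' (Finset.mem_erase.mpr ⟨hij₀, hiJ⟩))
    rw [← top_le_iff, ← hJ.2]
    exact hJle
  have hJ'b : IsBasic Φ J' := isBasic_of_span_card hspanJ' hcardJ'
  have hcap' : lam ∈ coneOf Φ ↑J' :=
    mem_coneOf_finset.mpr ⟨y, hy0, hysupp, (hysum t).symm⟩
  refine ⟨J', hJ'b, ?_, hcap', ?_⟩
  · rw [hJ'def]
    exact Finset.insert_subset_insert _ (Finset.erase_subset _ _)
  · have h1 : gammaB Φ c hJ'b lam = ∑ i, y i * c i :=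
      gammaB_of_rep Φ c hJ'b hysupp (hysum t)
    have h2 : ∑ i, y i * c i = gammaB Φ c hJ lam + ∑ i, y i * rcost Φ c hJ i :=
      key_identity Φ c hJ (hysum t)
    have h3 : ∑ i, y i * rcost Φ c hJ i = t * rcost Φ c hJ k := by
      rw [Finset.sum_eq_single k]
      · have : y k = t := by
          show q k + t * δ k = t
          rw [hδk, hqk]; ring
        rw [this]
      · intro i _ hik
        by_cases hiJ : i ∈ J
        · rw [rcost_of_mem Φ c hJ hiJ, mul_zero]
        · have : i ∉ J' := by
            rw [hJ'def]
            intro h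
            rcases Finset.mem_insert.mp h with h | h
            · exact hik h
            · exact hiJ (Finset.mem_of_mem_erase h)
          rw [hysupp i this, zero_mul]
      · intro h; exact absurd (Finset.mem_univ k) h
    have h4 : t * rcost Φ c hJ k < 0 := mul_neg_of_pos_of_neg htpos hrk
    rw [h1, h2, h3]
    linarith

/-- Comparison: a basis with positive reduced costs on `I` has strictly the
least value among capturing bases inside `I`. -/
lemma value_lt (Φ : Fin N → F) (c : Fin N → ℝ) {lam : F} (hreg : IsRegular Φ lam)
    {I J J' : Finset (Fin N)} (hJ : IsBasic Φ J)
    (hpos : ∀ k ∈ I, k ∉ J → 0 < rcost Φ c hJ k)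
    (hJ' : IsBasic Φ J') (hcap' : lam ∈ coneOf Φ ↑J') (hJ'I : J' ⊆ I)
    (hne : J' ≠ J) :
    gammaB Φ c hJ lam < gammaB Φ c hJ' lam := by
  set y : Fin N → ℝ := coordv Φ hJ' lam with hy
  have hy0 : ∀ i, 0 ≤ y i := coordv_nonneg Φ hJ' hcap'
  have hysupp : ∀ i ∉ J', y i = 0 := fun i hi => coordv_of_not_mem hJ' lam hi
  have hysum : ∑ i, y i • Φ i = lam := sum_coordv hJ' lam
  have h1 : gammaB Φ c hJ' lam = ∑ i, y i * c i := gammaB_of_rep Φ c hJ' hysupp hysum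
  have h2 : ∑ i, y i * c i = gammaB Φ c hJ lam + ∑ i, y i * rcost Φ c hJ i :=
    key_identity Φ c hJ hysum
  have hterm : ∀ i, 0 ≤ y i * rcost Φ c hJ i := by
    intro i
    by_cases hiJ : i ∈ J
    · rw [rcost_of_mem Φ c hJ hiJ, mul_zero]
    · by_cases hiJ' : i ∈ J'
      · exact mul_nonneg (hy0 i) (le_of_lt (hpos i (hJ'I hiJ') hiJ))
      · rw [hysupp i hiJ', zero_mul]
  have hnz : ∑ i, y i * rcost Φ c hJ i ≠ 0 := by
    intro hzero
    have hall := (Finset.sum_eq_zero_iff_of_nonneg (fun i _ => hterm i)).mp hzero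
    have hsupp2 : ∀ i ∉ J, y i = 0 := by
      intro i hiJ
      by_cases hiJ' : i ∈ J'
      · have := hall i (Finset.mem_univ i)
        have hrpos := hpos i (hJ'I hiJ') hiJ
        rcases mul_eq_zero.mp this with h | h
        · exact h
        · exact absurd h (ne_of_gt hrpos)
      · exact hysupp i hiJ'
    have hJ'subJ : J' ⊆ J := by
      intro j hj
      by_contra hjJ
      have h1 := hsupp2 j hjJ
      have h2 := coordv_pos Φ hJ' hreg hcap' hj
      rw [hy] at h1
      linarith
    have : J' = J := Finset.eq_of_subset_of_card_le hJ'subJ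
      (by rw [card_of_isBasic hJ, card_of_isBasic hJ'])
    exact hne this
  have hposum : 0 < ∑ i, y i * rcost Φ c hJ i :=
    lt_of_le_of_ne (Finset.sum_nonneg (fun i _ => hterm i)) (Ne.symm hnz)
  rw [h1, h2]
  linarith

end BGwork3
section BGwork4
set_option linter.unusedSectionVars false
set_option maxHeartbeats 1000000
variable {F : Type*} [NormedAddCommGroup F] [NormedSpace ℝ F] [FiniteDimensional ℝ F]
variable {N : ℕ}

/-- Total version of the value function. -/
noncomputable def Vval (Φ : Fin N → F) (c : Fin N → ℝ) (lam : F)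
    (J : Finset (Fin N)) : ℝ :=
  if h : IsBasic Φ J then gammaB Φ c h lam else 0

lemma Vval_eq (Φ : Fin N → F) (c : Fin N → ℝ) (lam : F) {J : Finset (Fin N)}
    (h : IsBasic Φ J) : Vval Φ c lam J = gammaB Φ c h lam := dif_pos h

/-- Total version of the reduced cost. -/
noncomputable def Rcost (Φ : Fin N → F) (c : Fin N → ℝ) (J : Finset (Fin N))
    (k : Fin N) : ℝ :=
  if h : IsBasic Φ J then rcost Φ c h k else 0

lemma Rcost_eq (Φ : Fin N → F) (c : Fin N → ℝ) {J : Finset (Fin N)}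
    (h : IsBasic Φ J) (k : Fin N) : Rcost Φ c J k = rcost Φ c h k := dif_pos h

/-- Genericity of the objective `c`. -/
def GenericC (Φ : Fin N → F) (lam : F) (c : Fin N → ℝ) : Prop :=
  ∀ J : Finset (Fin N), IsBasic Φ J → lam ∈ coneOf Φ ↑J → ∀ k ∉ J,
    Rcost Φ c J k ≠ 0

lemma gammaB_neg_c (Φ : Fin N → F) (c : Fin N → ℝ) {J : Finset (Fin N)}
    (hJ : IsBasic Φ J) (v : F) : gammaB Φ (-c) hJ v = -gammaB Φ c hJ v := by
  rw [gammaB_apply, gammaB_apply, ← Finset.sum_neg_distrib]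
  exact Finset.sum_congr rfl (fun j _ => by simp)

lemma Rcost_neg_c (Φ : Fin N → F) (c : Fin N → ℝ) (J : Finset (Fin N)) (k : Fin N) :
    Rcost Φ (-c) J k = -Rcost Φ c J k := by
  by_cases h : IsBasic Φ J
  · rw [Rcost_eq Φ (-c) h, Rcost_eq Φ c h, rcost, rcost, gammaB_neg_c]
    simp; ring
  · rw [Rcost, Rcost, dif_neg h, dif_neg h, neg_zero]

lemma GenericC_neg (Φ : Fin N → F) (lam : F) (c : Fin N → ℝ)
    (h : GenericC Φ lam c) : GenericC Φ lam (-c) := by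
  intro J hb hcone k hk
  rw [Rcost_neg_c]
  exact neg_ne_zero.mpr (h J hb hcone k hk)

/-- Existence and uniqueness of the capturing basis inside `I` with all
reduced costs positive. -/
lemma exists_unique_posbasis (Φ : Fin N → F) (c : Fin N → ℝ) (a : F →ₗ[ℝ] ℝ)
    (ha : ∀ i, 0 < a (Φ i)) {lam : F} (hreg : IsRegular Φ lam)
    (hgen : GenericC Φ lam c) {I : Finset (Fin N)}
    (hne : ∃ J₀, (IsBasic Φ J₀ ∧ lam ∈ coneOf Φ ↑J₀) ∧ J₀ ⊆ I) :
    ∃! J, ((IsBasic Φ J ∧ lam ∈ coneOf Φ ↑J) ∧ J ⊆ I) ∧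
      ∀ k ∈ I, k ∉ J → 0 < Rcost Φ c J k := by
  classical
  set s : Finset (Finset (Fin N)) :=
    Finset.univ.filter (fun J => (IsBasic Φ J ∧ lam ∈ coneOf Φ ↑J) ∧ J ⊆ I) with hs
  have hsne : s.Nonempty := by
    obtain ⟨J₀, h1, h2⟩ := hne
    exact ⟨J₀, Finset.mem_filter.mpr ⟨Finset.mem_univ _, h1, h2⟩⟩
  obtain ⟨J₀, hJ₀s, hmin⟩ := Finset.exists_min_image s (Vval Φ c lam) hsne
  obtain ⟨-, ⟨hb₀, hcone₀⟩, hsub₀⟩ := Finset.mem_filter.mp hJ₀s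
  -- the minimizing basis has positive reduced costs
  have hposbasis : ∀ J, ((IsBasic Φ J ∧ lam ∈ coneOf Φ ↑J) ∧ J ⊆ I) →
      (∀ J' ∈ s, Vval Φ c lam J ≤ Vval Φ c lam J') →
      ∀ k ∈ I, k ∉ J → 0 < Rcost Φ c J k := by
    rintro J ⟨⟨hb, hcone⟩, hsub⟩ hminJ k hkI hkJ
    have hr := hgen J hb hcone k hkJ
    rcases lt_or_gt_of_ne hr with hlt | hgt
    · exfalso
      rw [Rcost_eq Φ c hb] at hlt
      obtain ⟨J', hJ', hsub', hcap', hval⟩ := pivot Φ c a ha hreg hb hcone hkJ hlt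
      have hJ's : J' ∈ s := by
        refine Finset.mem_filter.mpr ⟨Finset.mem_univ _, ⟨hJ', hcap'⟩, ?_⟩
        exact hsub'.trans (Finset.insert_subset hkI hsub)
      have := hminJ J' hJ's
      rw [Vval_eq Φ c lam hb, Vval_eq Φ c lam hJ'] at this
      linarith
    · exact hgt
  have hpos₀ := hposbasis J₀ ⟨⟨hb₀, hcone₀⟩, hsub₀⟩ hmin
  refine ⟨J₀, ⟨⟨⟨hb₀, hcone₀⟩, hsub₀⟩, hpos₀⟩, ?_⟩
  rintro J ⟨⟨⟨hb, hcone⟩, hsub⟩, hpos⟩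
  by_contra hneq
  have h1 : gammaB Φ c hb lam < gammaB Φ c hb₀ lam := by
    refine value_lt Φ c hreg hb ?_ hb₀ hcone₀ hsub₀ (fun h => hneq h.symm)
    intro k hkI hkJ
    have := hpos k hkI hkJ
    rwa [Rcost_eq Φ c hb] at this
  have h2 : gammaB Φ c hb₀ lam < gammaB Φ c hb lam := by
    refine value_lt Φ c hreg hb₀ ?_ hb hcone hsub hneq
    intro k hkI hkJ
    have := hpos₀ k hkI hkJ
    rwa [Rcost_eq Φ c hb₀] at this
  linarith

/-- The linear functional (in `c`) computing the reduced cost. -/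
noncomputable def rcostL (Φ : Fin N → F) {J : Finset (Fin N)} (hJ : IsBasic Φ J)
    (k : Fin N) : (Fin N → ℝ) →ₗ[ℝ] ℝ :=
  LinearMap.proj k - ∑ j : {x // x ∈ J},
    ((bas Φ hJ).repr (Φ k) j) • LinearMap.proj (R := ℝ) (φ := fun _ : Fin N => ℝ) j.1

lemma rcostL_apply (Φ : Fin N → F) {J : Finset (Fin N)} (hJ : IsBasic Φ J)
    (k : Fin N) (c : Fin N → ℝ) : rcostL Φ hJ k c = rcost Φ c hJ k := by
  rw [rcost, gammaB_apply]
  simp only [rcostL, LinearMap.sub_apply, LinearMap.sum_apply, LinearMap.smul_apply,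
    LinearMap.proj_apply, smul_eq_mul]
  congr 1
  exact Finset.sum_congr rfl (fun j _ => mul_comm _ _)

lemma rcostL_ne_zero (Φ : Fin N → F) {J : Finset (Fin N)} (hJ : IsBasic Φ J)
    {k : Fin N} (hk : k ∉ J) : rcostL Φ hJ k ≠ 0 := by
  intro h
  have h1 : rcostL Φ hJ k (fun i => if i = k then (1:ℝ) else 0) = 0 := by
    rw [h]; rfl
  rw [rcostL_apply, rcost, gammaB_apply] at h1
  have h2 : ∑ j : {x // x ∈ J},
      (fun i => if i = k then (1:ℝ) else 0) j.1 * ((bas Φ hJ).repr (Φ k)) j = 0 := by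
    refine Finset.sum_eq_zero (fun j _ => ?_)
    have : j.1 ≠ k := fun hek => hk (hek ▸ j.2)
    simp [this]
  rw [h2] at h1
  simp at h1

/-- Avoiding finitely many nonzero linear functionals inside an open set. -/
lemma avoid_finite {G : Type} (s : Finset G)
    (L : G → (Fin N → ℝ) →ₗ[ℝ] ℝ) (hL : ∀ g ∈ s, L g ≠ 0)
    (U : Set (Fin N → ℝ)) (hU : IsOpen U) (hne : U.Nonempty) :
    ∃ c ∈ U, ∀ g ∈ s, L g c ≠ 0 := by
  classical
  induction s using Finset.induction_on generalizing U with
  | empty =>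
    obtain ⟨c, hc⟩ := hne
    exact ⟨c, hc, by simp⟩
  | @insert a s' hns ih =>
    have hcont : Continuous (L a) := LinearMap.continuous_of_finiteDimensional _
    have hopen : IsOpen (U ∩ {c | L a c ≠ 0}) := by
      refine hU.inter ?_
      have h : {c : Fin N → ℝ | L a c ≠ 0} = (L a) ⁻¹' ({0}ᶜ) := rfl
      rw [h]
      exact (isOpen_compl_singleton).preimage hcont
    have hne' : (U ∩ {c | L a c ≠ 0}).Nonempty := by
      by_contra hcon
      rw [Set.not_nonempty_iff_eq_empty] at hcon
      have hsubker : U ⊆ (LinearMap.ker (L a) : Set (Fin N → ℝ)) := by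
        intro x hx
        by_contra hxk
        have hmem : x ∈ U ∩ {c | L a c ≠ 0} := by
          refine ⟨hx, ?_⟩
          simpa [LinearMap.mem_ker] using hxk
        rw [hcon] at hmem
        exact hmem
      have hint : (interior ((LinearMap.ker (L a) : Set (Fin N → ℝ)))).Nonempty := by
        obtain ⟨x, hx⟩ := hne
        exact ⟨x, (IsOpen.subset_interior_iff hU).mpr hsubker hx⟩
      have htop := Submodule.eq_top_of_nonempty_interior' _ hint
      exact hL a (Finset.mem_insert_self a s') (LinearMap.ker_eq_top.mp htop)
    obtain ⟨c, hc1, hc2⟩ :=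
      ih (fun g hg => hL g (Finset.mem_insert_of_mem hg)) _ hopen hne'
    refine ⟨c, hc1.1, ?_⟩
    intro g hg
    rcases Finset.mem_insert.mp hg with h | h
    · subst h; exact hc1.2
    · exact hc2 g h

/-- A generic `c` exists in any nonempty open set of objectives. -/
lemma exists_generic (Φ : Fin N → F) (lam : F) (U : Set (Fin N → ℝ))
    (hU : IsOpen U) (hne : U.Nonempty) :
    ∃ c ∈ U, GenericC Φ lam c := by
  classical
  set s : Finset (Finset (Fin N) × Fin N) :=
    Finset.univ.filter (fun p => IsBasic Φ p.1 ∧ p.2 ∉ p.1) with hs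
  set L : Finset (Fin N) × Fin N → (Fin N → ℝ) →ₗ[ℝ] ℝ :=
    fun p => if h : IsBasic Φ p.1 ∧ p.2 ∉ p.1 then rcostL Φ h.1 p.2 else 0 with hL
  have hLne : ∀ p ∈ s, L p ≠ 0 := by
    intro p hp
    obtain ⟨-, h⟩ := Finset.mem_filter.mp hp
    rw [hL]
    simp only [dif_pos h]
    exact rcostL_ne_zero Φ h.1 h.2
  obtain ⟨c, hcU, hc⟩ := avoid_finite s L hLne U hU hne
  refine ⟨c, hcU, ?_⟩
  intro J hb hcone k hk
  have hps : (J, k) ∈ s := Finset.mem_filter.mpr ⟨Finset.mem_univ _, hb, hk⟩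
  have := hc (J, k) hps
  rw [hL] at this
  simp only [dif_pos (⟨hb, hk⟩ : IsBasic Φ J ∧ k ∉ J)] at this
  rw [Rcost_eq Φ c hb, ← rcostL_apply Φ hb k c]
  exact this

end BGwork4
section BGwork5
set_option linter.unusedSectionVars false
set_option maxHeartbeats 1000000
variable {F : Type*} [NormedAddCommGroup F] [NormedSpace ℝ F] [FiniteDimensional ℝ F]
variable {N : ℕ}

/-- Independence of the subfamily indexed by `S`. -/
def famInd (Φ : Fin N → F) (S : Finset (Fin N)) : Prop :=
  LinearIndependent ℝ (fun i : {x // x ∈ S} => Φ i.1)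

lemma famInd_empty (Φ : Fin N → F) : famInd Φ (∅ : Finset (Fin N)) := by
  have : IsEmpty {x // x ∈ (∅ : Finset (Fin N))} :=
    ⟨fun x => (Finset.notMem_empty _ x.2)⟩
  exact linearIndependent_empty_type

/-- The support of a real-valued coefficient vector as a `Finset`. -/
noncomputable def suppF (y : Fin N → ℝ) : Finset (Fin N) :=
  Finset.univ.filter (fun i => y i ≠ 0)

lemma mem_suppF {y : Fin N → ℝ} {i : Fin N} : i ∈ suppF y ↔ y i ≠ 0 := by
  rw [suppF, Finset.mem_filter]
  simp

lemma famInd_insert {Φ : Fin N → F} {S : Finset (Fin N)} (hS : famInd Φ S)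
    {i₀ : Fin N} (hx : Φ i₀ ∉ Submodule.span ℝ (Φ '' ↑S)) (hi₀ : i₀ ∉ S) :
    famInd Φ (insert i₀ S) := by
  rw [famInd, Fintype.linearIndependent_iff]
  intro g hsum
  set g' : Fin N → ℝ := fun i => if h : i ∈ insert i₀ S then g ⟨i, h⟩ else 0 with hg'
  have hval : ∀ j : {x // x ∈ insert i₀ S}, g' j.1 = g j := by
    intro j
    simp only [hg']
    rw [dif_pos j.2]
  have hgsum : ∑ i ∈ insert i₀ S, g' i • Φ i = 0 := by
    rw [← Finset.sum_attach (insert i₀ S) (fun i => g' i • Φ i)]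
    rw [← hsum, Finset.univ_eq_attach]
    exact Finset.sum_congr rfl (fun j _ => by rw [hval j])
  rw [Finset.sum_insert hi₀] at hgsum
  have hSspan : ∑ i ∈ S, g' i • Φ i ∈ Submodule.span ℝ (Φ '' ↑S) := by
    refine Submodule.sum_mem _ (fun i hi => ?_)
    exact Submodule.smul_mem _ _ (Submodule.subset_span ⟨i, by simpa using hi, rfl⟩)
  have hg'i₀ : g' i₀ = 0 := by
    by_contra hne
    have h0 : g' i₀ • Φ i₀ = -(∑ i ∈ S, g' i • Φ i) :=
      eq_neg_of_add_eq_zero_left hgsum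
    have h1 : Φ i₀ = (g' i₀)⁻¹ • (-(∑ i ∈ S, g' i • Φ i)) := by
      rw [← h0, inv_smul_smul₀ hne]
    exact hx (h1 ▸ Submodule.smul_mem _ _ (Submodule.neg_mem _ hSspan))
  rw [hg'i₀, zero_smul, zero_add] at hgsum
  have hSsum : ∑ j : {x // x ∈ S}, g' j.1 • Φ j.1 = 0 := by
    rw [Finset.univ_eq_attach, Finset.sum_attach S (fun i => g' i • Φ i)]
    exact hgsum
  have hzero := Fintype.linearIndependent_iff.mp hS (fun j => g' j.1) hSsum
  intro j
  rw [← hval j]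
  rcases Finset.mem_insert.mp j.2 with h | h
  · rw [h]
    exact hg'i₀
  · exact hzero ⟨j.1, h⟩

/-- Carathéodory-type support reduction. -/
lemma carath_aux (Φ : Fin N → F) :
    ∀ n : ℕ, ∀ y : Fin N → ℝ, (∀ i, 0 ≤ y i) → (suppF y).card ≤ n →
      ∃ y' : Fin N → ℝ, (∀ i, 0 ≤ y' i) ∧ (∀ i, y' i ≠ 0 → y i ≠ 0) ∧
        (∑ i, y' i • Φ i = ∑ i, y i • Φ i) ∧ famInd Φ (suppF y') := by
  intro n
  induction n with
  | zero =>
    intro y hy0 hcard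
    have hS : suppF y = ∅ := Finset.card_eq_zero.mp (Nat.le_zero.mp hcard)
    refine ⟨y, hy0, fun i h => h, rfl, ?_⟩
    rw [hS]; exact famInd_empty Φ
  | succ n ih =>
    intro y hy0 hcard
    by_cases hind : famInd Φ (suppF y)
    · exact ⟨y, hy0, fun i h => h, rfl, hind⟩
    obtain ⟨g, hgsum, j₁, hgj₁⟩ := Fintype.not_linearIndependent_iff.mp hind
    set gg : Fin N → ℝ := fun i => if h : i ∈ suppF y then g ⟨i, h⟩ else 0 with hgg
    have hvalgg : ∀ j : {x // x ∈ suppF y}, gg j.1 = g j := by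
      intro j
      simp only [hgg]
      rw [dif_pos j.2]
    have hggsum : ∑ i, gg i • Φ i = 0 := by
      have h1 : ∑ i, gg i • Φ i = ∑ i ∈ suppF y, gg i • Φ i :=
        (Finset.sum_subset (Finset.subset_univ _)
          (fun i _ hi => by rw [hgg]; simp [dif_neg hi])).symm
      rw [h1, ← Finset.sum_attach (suppF y) (fun i => gg i • Φ i), ← hgsum,
        Finset.univ_eq_attach]
      refine Finset.sum_congr rfl (fun j _ => ?_)
      rw [hvalgg j]
    have hggsupp : ∀ i ∉ suppF y, gg i = 0 := fun i hi => by rw [hgg]; simp [dif_neg hi]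
    have hmain : ∃ g2 : Fin N → ℝ, (∑ i, g2 i • Φ i = 0) ∧
        (∀ i ∉ suppF y, g2 i = 0) ∧ ∃ i₁, 0 < g2 i₁ := by
      by_cases hpos : ∃ i, 0 < gg i
      · exact ⟨gg, hggsum, hggsupp, hpos⟩
      · push_neg at hpos
        refine ⟨-gg, ?_, fun i hi => by simp [hggsupp i hi], ⟨j₁.1, ?_⟩⟩
        · rw [← neg_zero, ← hggsum, ← Finset.sum_neg_distrib]
          exact Finset.sum_congr rfl (fun i _ => by simp)
        · have h1 : gg j₁.1 = g j₁ := hvalgg j₁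
          have h2 : gg j₁.1 ≠ 0 := by rw [h1]; exact hgj₁
          have h3 := hpos j₁.1
          simp only [Pi.neg_apply]
          rcases lt_or_eq_of_le h3 with h | h
          · linarith
          · exact absurd h h2
    obtain ⟨g2, hg2sum, hg2supp, i₁, hi₁⟩ := hmain
    set T : Finset (Fin N) := (suppF y).filter (fun i => 0 < g2 i) with hT
    have hTne : T.Nonempty := by
      refine ⟨i₁, Finset.mem_filter.mpr ⟨?_, hi₁⟩⟩
      by_contra h
      rw [hg2supp i₁ h] at hi₁
      exact lt_irrefl _ hi₁
    obtain ⟨j₀, hj₀T, hminT⟩ := Finset.exists_min_image T (fun i => y i / g2 i) hTne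
    have hj₀supp : j₀ ∈ suppF y := (Finset.mem_filter.mp hj₀T).1
    have hg2j₀ : 0 < g2 j₀ := (Finset.mem_filter.mp hj₀T).2
    set t : ℝ := y j₀ / g2 j₀ with htdef
    have ht0 : 0 ≤ t := div_nonneg (hy0 j₀) (le_of_lt hg2j₀)
    set y'' : Fin N → ℝ := fun i => y i - t * g2 i with hy''
    have hy''0 : ∀ i, 0 ≤ y'' i := by
      intro i
      show 0 ≤ y i - t * g2 i
      rcases lt_trichotomy (g2 i) 0 with h | h | h
      · nlinarith [hy0 i]
      · rw [h]; simpa using hy0 i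
      · have hisupp : i ∈ suppF y := by
          by_contra hi
          rw [hg2supp i hi] at h
          exact lt_irrefl _ h
        have := hminT i (Finset.mem_filter.mpr ⟨hisupp, h⟩)
        have hle : t * g2 i ≤ y i := (le_div_iff₀ h).mp this
        linarith
    have hy''sum : ∑ i, y'' i • Φ i = ∑ i, y i • Φ i := by
      have : ∀ i, y'' i • Φ i = y i • Φ i - t • (g2 i • Φ i) := by
        intro i
        show (y i - t * g2 i) • Φ i = _
        rw [sub_smul, smul_smul]
      rw [Finset.sum_congr rfl (fun i _ => this i), Finset.sum_sub_distrib,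
        ← Finset.smul_sum, hg2sum, smul_zero, sub_zero]
    have hy''supp : ∀ i, y'' i ≠ 0 → y i ≠ 0 := by
      intro i hne heq
      have h2 : g2 i = 0 := hg2supp i (by rw [mem_suppF]; simpa using heq)
      apply hne
      show y i - t * g2 i = 0
      rw [heq, h2]; ring
    have hy''j₀ : y'' j₀ = 0 := by
      show y j₀ - t * g2 j₀ = 0
      rw [htdef]; field_simp; ring
    have hcard'' : (suppF y'').card ≤ n := by
      have hsub : suppF y'' ⊆ (suppF y).erase j₀ := by
        intro i hi
        rw [mem_suppF] at hi
        refine Finset.mem_erase.mpr ⟨?_, ?_⟩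
        · intro h; rw [h] at hi; exact hi hy''j₀
        · rw [mem_suppF]; exact hy''supp i hi
      calc (suppF y'').card ≤ ((suppF y).erase j₀).card := Finset.card_le_card hsub
        _ = (suppF y).card - 1 := Finset.card_erase_of_mem hj₀supp
        _ ≤ n := by omega
    obtain ⟨y', h1, h2, h3, h4⟩ := ih y'' hy''0 hcard''
    exact ⟨y', h1, fun i hne => hy''supp i (h2 i hne), by rw [h3, hy''sum], h4⟩

lemma cone_carath {Φ : Fin N → F} {I : Finset (Fin N)} {lam : F}
    (hI : lam ∈ coneOf Φ ↑I) :
    ∃ S : Finset (Fin N), S ⊆ I ∧ famInd Φ S ∧ lam ∈ coneOf Φ ↑S := by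
  rw [mem_coneOf_finset] at hI
  obtain ⟨y, hy0, hysupp, hysum⟩ := hI
  obtain ⟨y', h1, h2, h3, h4⟩ := carath_aux Φ (suppF y).card y hy0 le_rfl
  refine ⟨suppF y', ?_, h4, ?_⟩
  · intro i hi
    rw [mem_suppF] at hi
    by_contra hiI
    exact (h2 i hi) (hysupp i hiI)
  · rw [mem_coneOf_finset]
    exact ⟨y', h1, fun i hi => by_contra (fun h => hi (mem_suppF.mpr h)),
      by rw [h3, ← hysum]⟩

/-- Extension of an independent subfamily inside `W` to one spanning `Φ''W`. -/
lemma extend_ind (Φ : Fin N → F) (W : Finset (Fin N)) :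
    ∀ n : ℕ, ∀ P : Finset (Fin N), P ⊆ W → famInd Φ P → W.card - P.card ≤ n →
      ∃ S, P ⊆ S ∧ S ⊆ W ∧ famInd Φ S ∧
        ∀ i ∈ W, Φ i ∈ Submodule.span ℝ (Φ '' ↑S) := by
  intro n
  induction n with
  | zero =>
    intro P hPW hPind hcard
    refine ⟨P, subset_refl _, hPW, hPind, ?_⟩
    have hPeq : P = W := Finset.eq_of_subset_of_card_le hPW (by omega)
    subst hPeq
    exact fun i hi => Submodule.subset_span ⟨i, by simpa using hi, rfl⟩
  | succ n ih =>
    intro P hPW hPind hcard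
    by_cases hall : ∀ i ∈ W, Φ i ∈ Submodule.span ℝ (Φ '' ↑P)
    · exact ⟨P, subset_refl _, hPW, hPind, hall⟩
    push_neg at hall
    obtain ⟨w, hwW, hw⟩ := hall
    have hwP : w ∉ P := fun h => hw (Submodule.subset_span ⟨w, by simpa using h, rfl⟩)
    have hins : famInd Φ (insert w P) := famInd_insert hPind hw hwP
    have hcard' : W.card - (insert w P).card ≤ n := by
      rw [Finset.card_insert_of_notMem hwP]
      have : P.card < W.card := Finset.card_lt_card ⟨hPW, fun h => hwP (h hwW)⟩
      omega
    obtain ⟨S, h1, h2, h3, h4⟩ := ih (insert w P)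
      (Finset.insert_subset hwW hPW) hins hcard'
    exact ⟨S, (Finset.subset_insert _ _).trans h1, h2, h3, h4⟩

/-- Growing an independent family to corank one. -/
lemma grow_ind (Φ : Fin N → F) (hgenΦ : Submodule.span ℝ (Set.range Φ) = ⊤) :
    ∀ n : ℕ, ∀ P : Finset (Fin N), famInd Φ P →
      P.card ≤ Module.finrank ℝ F - 1 → (Module.finrank ℝ F - 1) - P.card ≤ n →
      ∃ S, P ⊆ S ∧ famInd Φ S ∧ S.card = Module.finrank ℝ F - 1 := by
  intro n
  induction n with
  | zero =>
    intro P hPind hple hcard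
    exact ⟨P, subset_refl _, hPind, by omega⟩
  | succ n ih =>
    intro P hPind hple hcard
    by_cases heq : P.card = Module.finrank ℝ F - 1
    · exact ⟨P, subset_refl _, hPind, heq⟩
    have hlt : P.card < Module.finrank ℝ F - 1 := lt_of_le_of_ne hple heq
    have hspanne : Submodule.span ℝ (Φ '' ↑P) ≠ ⊤ := by
      intro htop
      have h1 : Module.finrank ℝ F ≤ (P.image Φ).card := by
        have h2 := finrank_span_finset_le_card (R := ℝ) (P.image Φ)
        rw [Finset.coe_image] at h2
        unfold Set.finrank at h2
        rw [htop] at h2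
        rw [finrank_top] at h2
        exact h2
      have h3 : (P.image Φ).card ≤ P.card := Finset.card_image_le
      omega
    have hex : ∃ w, Φ w ∉ Submodule.span ℝ (Φ '' ↑P) := by
      by_contra hcon
      push_neg at hcon
      apply hspanne
      rw [← top_le_iff, ← hgenΦ, Submodule.span_le]
      rintro v ⟨i, rfl⟩
      exact hcon i
    obtain ⟨w, hw⟩ := hex
    have hwP : w ∉ P := fun h => hw (Submodule.subset_span ⟨w, by simpa using h, rfl⟩)
    have hins : famInd Φ (insert w P) := famInd_insert hPind hw hwP
    have h1 : (insert w P).card = P.card + 1 := Finset.card_insert_of_notMem hwP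
    obtain ⟨S, hs1, hs2, hs3⟩ := ih (insert w P) hins (by omega) (by omega)
    exact ⟨S, (Finset.subset_insert _ _).trans hs1, hs2, hs3⟩

lemma span_of_regular {Φ : Fin N → F} {lam : F} (hreg : IsRegular Φ lam)
    (hgenΦ : Submodule.span ℝ (Set.range Φ) = ⊤) {I : Finset (Fin N)}
    (hlamI : lam ∈ Submodule.span ℝ (Φ '' ↑I)) :
    Submodule.span ℝ (Φ '' ↑I) = ⊤ := by
  by_contra hne
  have hr1 : 1 ≤ Module.finrank ℝ F := by
    by_contra h
    have h0 : Module.finrank ℝ F = 0 := by omega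
    have hsub : Subsingleton F := by
      have := Module.finrank_zero_iff (R := ℝ) (M := F)
      exact this.mp h0
    apply hne
    rw [Submodule.eq_top_iff']
    intro x
    have : x = 0 := Subsingleton.elim x 0
    rw [this]
    exact Submodule.zero_mem _
  obtain ⟨S₁, -, hS₁I, hS₁ind, hS₁all⟩ :=
    extend_ind Φ I I.card ∅ (Finset.empty_subset _) (famInd_empty Φ) (by omega)
  have hspan_eq : Submodule.span ℝ (Φ '' ↑S₁) = Submodule.span ℝ (Φ '' ↑I) := by
    refine le_antisymm (Submodule.span_mono (Set.image_mono (by simpa using hS₁I))) ?_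
    rw [Submodule.span_le]
    rintro v ⟨i, hi, rfl⟩
    exact hS₁all i (by simpa using hi)
  have hS₁ne : Submodule.span ℝ (Φ '' ↑S₁) ≠ ⊤ := by rw [hspan_eq]; exact hne
  have hS₁card : S₁.card ≤ Module.finrank ℝ F - 1 := by
    have hle : S₁.card ≤ Module.finrank ℝ F := by
      have := hS₁ind.fintype_card_le_finrank
      rwa [Fintype.card_coe] at this
    have hneq : S₁.card ≠ Module.finrank ℝ F := by
      intro hcard
      apply hS₁ne
      have hnonempty : Nonempty {x // x ∈ S₁} := by
        rw [← Fintype.card_pos_iff, Fintype.card_coe]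
        omega
      have := hS₁ind.span_eq_top_of_card_eq_finrank
        (by rw [Fintype.card_coe]; exact hcard)
      rw [← this]
      congr 1
      rw [Set.image_eq_range]; rfl
    omega
  obtain ⟨S, hS₁S, hSind, hScard⟩ :=
    grow_ind Φ hgenΦ (Module.finrank ℝ F) S₁ hS₁ind hS₁card (by omega)
  have hlamS : lam ∈ Submodule.span ℝ (Φ '' ↑S) := by
    have h1 : Submodule.span ℝ (Φ '' ↑S₁) ≤ Submodule.span ℝ (Φ '' ↑S) :=
      Submodule.span_mono (Set.image_mono (by simpa using hS₁S))
    rw [← hspan_eq] at hlamI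
    exact h1 hlamI
  exact hreg _ ⟨S, by omega, hSind, rfl⟩ hlamS

lemma exists_capt_subset {Φ : Fin N → F} {lam : F} (hreg : IsRegular Φ lam)
    (hgenΦ : Submodule.span ℝ (Set.range Φ) = ⊤) {I : Finset (Fin N)}
    (hI : lam ∈ coneOf Φ ↑I) :
    ∃ J, J ⊆ I ∧ IsBasic Φ J ∧ lam ∈ coneOf Φ ↑J := by
  obtain ⟨S, hSI, hSind, hScone⟩ := cone_carath hI
  have hspanI : Submodule.span ℝ (Φ '' ↑I) = ⊤ :=
    span_of_regular hreg hgenΦ (mem_span_of_mem_coneOf hI)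
  obtain ⟨J, hSJ, hJI, hJind, hJall⟩ :=
    extend_ind Φ I I.card S hSI hSind (by omega)
  have hspanJ : Submodule.span ℝ (Φ '' ↑J) = ⊤ := by
    rw [← top_le_iff, ← hspanI, Submodule.span_le]
    rintro v ⟨i, hi, rfl⟩
    exact hJall i (by simpa using hi)
  refine ⟨J, hJI, ⟨hJind, hspanJ⟩, ?_⟩
  exact coneOf_mono (by simpa using hSJ) hScone

end BGwork5
section BGwork6
set_option linter.unusedSectionVars false
set_option maxHeartbeats 1000000
variable {F : Type*} [NormedAddCommGroup F] [NormedSpace ℝ F] [FiniteDimensional ℝ F]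
variable {N : ℕ}

lemma tope_point {Φ : Fin N → F} {τ : Set F} (hτ : IsTope Φ τ) :
    ∃ lam ∈ τ, IsRegular Φ lam := by
  obtain ⟨μ, hμreg, hτeq⟩ := hτ
  refine ⟨μ, ?_, hμreg⟩
  rw [hτeq]
  exact mem_connectedComponentIn hμreg

lemma tope_subset_cone {Φ : Fin N → F} {τ : Set F} (hτ : IsTope Φ τ)
    {lam : F} (hlam : lam ∈ τ) {J : Finset (Fin N)} (hJ : IsBasic Φ J)
    (hc : lam ∈ coneOf Φ ↑J) : τ ⊆ coneOf Φ ↑J := by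
  obtain ⟨μ, hμreg, hτeq⟩ := hτ
  have hτsub : τ ⊆ {x | IsRegular Φ x} := by
    rw [hτeq]; exact connectedComponentIn_subset _ _
  have hτconn : IsPreconnected τ := by
    rw [hτeq]
    exact (isConnected_connectedComponentIn_iff.mpr hμreg).isPreconnected
  have hreg : IsRegular Φ lam := hτsub hlam
  intro x hx
  have key : ∀ j : {y // y ∈ J}, ∀ z ∈ τ, 0 < (bas Φ hJ).repr z j := by
    intro j z hz
    by_contra hle
    push_neg at hle
    have hne : ∀ w ∈ τ, (bas Φ hJ).repr w j ≠ 0 := by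
      intro w hw h0
      refine coordv_ne_zero Φ hJ (hτsub hw) j.2 ?_
      rw [coordv_of_mem hJ w j.2]
      exact h0
    have hlam_pos : 0 < (bas Φ hJ).repr lam j := by
      have := coordv_pos Φ hJ hreg hc j.2
      rwa [coordv_of_mem hJ lam j.2] at this
    have hzlt : (bas Φ hJ).repr z j < 0 := lt_of_le_of_ne hle (hne z hz)
    set f : F → ℝ := fun w => ((bas Φ hJ).coord j) w with hf
    have hcont : Continuous f := ((bas Φ hJ).coord j).continuous_of_finiteDimensional
    have himg : IsPreconnected (f '' τ) := hτconn.image f hcont.continuousOn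
    have h0mem : (0:ℝ) ∈ f '' τ := by
      have hIcc : Set.Icc (f z) (f lam) ⊆ f '' τ :=
        himg.Icc_subset ⟨z, hz, rfl⟩ ⟨lam, hlam, rfl⟩
      refine hIcc ⟨?_, ?_⟩
      · rw [hf]; simp only [Module.Basis.coord_apply]; exact le_of_lt hzlt
      · rw [hf]; simp only [Module.Basis.coord_apply]; exact le_of_lt hlam_pos
    obtain ⟨w, hw, hfw⟩ := h0mem
    refine hne w hw ?_
    rw [hf] at hfw
    simpa [Module.Basis.coord_apply] using hfw
  rw [mem_coneOf_finset]
  refine ⟨coordv Φ hJ x, ?_, fun i hi => coordv_of_not_mem hJ x hi,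
    (sum_coordv hJ x).symm⟩
  intro i
  by_cases hi : i ∈ J
  · have := key ⟨i, hi⟩ x hx
    rw [coordv_of_mem hJ x hi]
    exact le_of_lt this
  · rw [coordv_of_not_mem hJ x hi]

lemma gens_iff {Φ : Fin N → F} {τ : Set F} (hτ : IsTope Φ τ)
    (hgenΦ : Submodule.span ℝ (Set.range Φ) = ⊤) {lam : F} (hlam : lam ∈ τ)
    (hreg : IsRegular Φ lam) (I : Finset (Fin N)) :
    I ∈ Gens Φ τ ↔ ∃ J, (IsBasic Φ J ∧ lam ∈ coneOf Φ ↑J) ∧ J ⊆ I := by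
  constructor
  · rintro ⟨hspan, hτc⟩
    obtain ⟨J, hJI, hJb, hJc⟩ := exists_capt_subset hreg hgenΦ (hτc hlam)
    exact ⟨J, ⟨hJb, hJc⟩, hJI⟩
  · rintro ⟨J, ⟨hJb, hJc⟩, hJI⟩
    constructor
    · rw [← top_le_iff, ← hJb.2]
      exact Submodule.span_mono (Set.image_mono (by simpa using hJI))
    · exact (tope_subset_cone hτ hlam hJb hJc).trans (coneOf_mono (by simpa using hJI))

end BGwork6
section BGwork7
set_option linter.unusedSectionVars false
set_option maxHeartbeats 1000000
variable {F : Type*} [NormedAddCommGroup F] [NormedSpace ℝ F] [FiniteDimensional ℝ F]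
variable {N : ℕ}

lemma prod_if_not_mem (s B : Finset (Fin N)) :
    (∏ j ∈ s, (if j ∈ B then (0:ℤ) else 1)) = if ∀ j ∈ s, j ∉ B then 1 else 0 := by
  split_ifs with h
  · exact Finset.prod_eq_one (fun j hj => if_neg (h j hj))
  · push_neg at h
    obtain ⟨j, hjs, hjB⟩ := h
    exact Finset.prod_eq_zero hjs (if_pos hjB)

lemma prod_if_mem (s B : Finset (Fin N)) :
    (∏ j ∈ s, (if j ∈ B then (1:ℤ) else 0)) = if s ⊆ B then 1 else 0 := by
  split_ifs with h
  · exact Finset.prod_eq_one (fun j hj => if_pos (h hj))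
  · rw [Finset.not_subset] at h
    obtain ⟨j, hjs, hjB⟩ := h
    exact Finset.prod_eq_zero hjs (if_neg hjB)

/-- Extraction of the coefficients `z B` from the polynomial identity. -/
lemma z_extract (Φ : Fin N → F) (τ : Set F) (z : Finset (Fin N) → ℤ)
    (hz : BGpoly Φ τ =
      ∑ B : Finset (Fin N),
        MvPolynomial.C (z B) *
          ((∏ i ∈ Bᶜ, MvPolynomial.X (Sum.inl i)) *
            ∏ i ∈ B, MvPolynomial.X (Sum.inr i)))
    (B : Finset (Fin N)) :
    z B = ∑ I ∈ Finset.univ.filter (fun I => I ∈ Gens Φ τ ∧ B ⊆ I),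
      (-1:ℤ)^(I.card - Module.finrank ℝ F) := by
  classical
  set ev : (Fin N ⊕ Fin N) → ℤ :=
    Sum.elim (fun i => if i ∈ B then 0 else 1) (fun i => if i ∈ B then 1 else 0)
    with hev
  have heq := congrArg (MvPolynomial.eval ev) hz
  -- right hand side evaluates to z B
  have hrhs : MvPolynomial.eval ev
      (∑ B' : Finset (Fin N), MvPolynomial.C (z B') *
        ((∏ i ∈ B'ᶜ, MvPolynomial.X (Sum.inl i)) *
          ∏ i ∈ B', MvPolynomial.X (Sum.inr i))) = z B := by
    rw [map_sum]
    have hterm : ∀ B' : Finset (Fin N),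
        MvPolynomial.eval ev (MvPolynomial.C (z B') *
          ((∏ i ∈ B'ᶜ, MvPolynomial.X (Sum.inl i)) *
            ∏ i ∈ B', MvPolynomial.X (Sum.inr i)))
        = z B' * (if B' = B then 1 else 0) := by
      intro B'
      rw [map_mul, map_mul, MvPolynomial.eval_C, map_prod, map_prod]
      have h1 : ∀ i, MvPolynomial.eval ev (MvPolynomial.X (Sum.inl i) :
          MvPolynomial (Fin N ⊕ Fin N) ℤ) = if i ∈ B then 0 else 1 := by
        intro i; rw [MvPolynomial.eval_X]; rfl
      have h2 : ∀ i, MvPolynomial.eval ev (MvPolynomial.X (Sum.inr i) :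
          MvPolynomial (Fin N ⊕ Fin N) ℤ) = if i ∈ B then 1 else 0 := by
        intro i; rw [MvPolynomial.eval_X]; rfl
      rw [Finset.prod_congr rfl (fun i _ => h1 i), Finset.prod_congr rfl (fun i _ => h2 i)]
      rw [prod_if_not_mem, prod_if_mem]
      congr 1
      by_cases hBB : B' = B
      · subst hBB
        rw [if_pos (fun j hj => by simpa using hj), if_pos (subset_refl _)]
        norm_num
      · by_cases hsub : B' ⊆ B
        · have h : ¬ (∀ j ∈ B'ᶜ, j ∉ B) := by
            intro hcon
            have hBsub : B ⊆ B' := by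
              intro j hj
              by_contra hjB'
              exact hcon j (Finset.mem_compl.mpr hjB') hj
            exact hBB (le_antisymm hsub hBsub)
          rw [if_neg h, if_neg hBB, zero_mul]
        · rw [if_neg hsub, if_neg hBB, mul_zero]
    rw [Finset.sum_congr rfl (fun B' _ => hterm B')]
    rw [Finset.sum_eq_single B]
    · simp
    · intro B' _ hne
      rw [if_neg hne, mul_zero]
    · intro h
      exact absurd (Finset.mem_univ B) h
  -- left hand side evaluates to the alternating sum
  have hlhs : MvPolynomial.eval ev (BGpoly Φ τ)
      = ∑ I ∈ Finset.univ.filter (fun I => I ∈ Gens Φ τ ∧ B ⊆ I),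
          (-1:ℤ)^(I.card - Module.finrank ℝ F) := by
    rw [BGpoly, map_sum]
    have hterm : ∀ I : Finset (Fin N),
        MvPolynomial.eval ev
          (if I ∈ Gens Φ τ then
            (-1 : MvPolynomial (Fin N ⊕ Fin N) ℤ) ^ (I.card - Module.finrank ℝ F) *
              ((∏ j ∈ Iᶜ, MvPolynomial.X (Sum.inl j)) *
                ∏ i ∈ I, (MvPolynomial.X (Sum.inl i) + MvPolynomial.X (Sum.inr i)))
          else 0)
        = if I ∈ Gens Φ τ ∧ B ⊆ I then (-1:ℤ)^(I.card - Module.finrank ℝ F) else 0 := by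
      intro I
      by_cases hI : I ∈ Gens Φ τ
      · rw [if_pos hI]
        rw [map_mul, map_mul, map_pow, map_neg, map_one, map_prod, map_prod]
        have h1 : ∀ j, MvPolynomial.eval ev (MvPolynomial.X (Sum.inl j) :
            MvPolynomial (Fin N ⊕ Fin N) ℤ) = if j ∈ B then 0 else 1 := by
          intro j; rw [MvPolynomial.eval_X]; rfl
        have h2 : ∀ i, MvPolynomial.eval ev
            (MvPolynomial.X (Sum.inl i) + MvPolynomial.X (Sum.inr i) :
              MvPolynomial (Fin N ⊕ Fin N) ℤ) = 1 := by
          intro i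
          rw [map_add, MvPolynomial.eval_X, MvPolynomial.eval_X]
          show (if i ∈ B then (0:ℤ) else 1) + (if i ∈ B then 1 else 0) = 1
          split_ifs <;> ring
        rw [Finset.prod_congr rfl (fun j _ => h1 j),
          Finset.prod_congr rfl (fun i _ => h2 i), prod_if_not_mem,
          Finset.prod_const_one, mul_one]
        have hBsub : (∀ j ∈ Iᶜ, j ∉ B) ↔ B ⊆ I := by
          constructor
          · intro h j hj
            by_contra hjI
            exact h j (Finset.mem_compl.mpr hjI) hj
          · intro h j hj hjB
            exact Finset.mem_compl.mp hj (h hjB)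
        by_cases hB : B ⊆ I
        · rw [if_pos (hBsub.mpr hB), if_pos ⟨hI, hB⟩, mul_one]
        · rw [if_neg (fun hcon => hB (hBsub.mp hcon)), if_neg (fun hcon => hB hcon.2),
            mul_zero]
      · rw [if_neg hI, if_neg (fun hcon => hI hcon.1), map_zero]
    rw [Finset.sum_congr rfl (fun I _ => hterm I), ← Finset.sum_filter]
  rw [hlhs, hrhs] at heq
  exact heq.symm

/-- Alternating sum over an interval of finsets. -/
lemma sum_Icc_neg_one_pow {X Y : Finset (Fin N)} (hXY : X ⊆ Y) :
    ∑ I ∈ Finset.Icc X Y, (-1:ℤ)^I.card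
      = if Y = X then (-1)^X.card else 0 := by
  classical
  have hbij : ∑ I ∈ Finset.Icc X Y, (-1:ℤ)^I.card
      = ∑ s ∈ (Y \ X).powerset, (-1:ℤ)^(s ∪ X).card := by
    refine Finset.sum_nbij' (fun I => I \ X) (fun s => s ∪ X) ?_ ?_ ?_ ?_ ?_
    · intro I hI
      rw [Finset.mem_Icc] at hI
      exact Finset.mem_powerset.mpr (Finset.sdiff_subset_sdiff hI.2 (subset_refl _))
    · intro s hs
      rw [Finset.mem_powerset] at hs
      rw [Finset.mem_Icc]
      constructor
      · exact Finset.subset_union_right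
      · refine Finset.union_subset ?_ hXY
        exact hs.trans (Finset.sdiff_subset)
    · intro I hI
      rw [Finset.mem_Icc] at hI
      exact Finset.sdiff_union_of_subset hI.1
    · intro s hs
      rw [Finset.mem_powerset] at hs
      have hdisj : Disjoint s X := by
        refine Finset.disjoint_left.mpr (fun i his hiX => ?_)
        exact (Finset.mem_sdiff.mp (hs his)).2 hiX
      exact Finset.union_sdiff_cancel_right hdisj
    · intro I hI
      rw [Finset.mem_Icc] at hI
      rw [Finset.sdiff_union_of_subset hI.1]
  rw [hbij]
  have hcard : ∀ s ∈ (Y \ X).powerset, ((s ∪ X).card = s.card + X.card) := by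
    intro s hs
    rw [Finset.mem_powerset] at hs
    refine Finset.card_union_of_disjoint ?_
    refine Finset.disjoint_left.mpr (fun i his hiX => ?_)
    exact (Finset.mem_sdiff.mp (hs his)).2 hiX
  rw [Finset.sum_congr rfl (fun s hs => by rw [hcard s hs, pow_add])]
  rw [← Finset.sum_mul, Finset.sum_powerset_neg_one_pow_card]
  by_cases hYX : Y = X
  · rw [if_pos hYX, if_pos (by rw [hYX]; exact Finset.sdiff_self X), one_mul]
  · rw [if_neg hYX, if_neg, zero_mul]
    intro hcon
    rw [Finset.sdiff_eq_empty_iff_subset] at hcon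
    exact hYX (le_antisymm hcon hXY)

end BGwork7
section BGwork8
set_option linter.unusedSectionVars false
set_option maxHeartbeats 1000000
variable {F : Type*} [NormedAddCommGroup F] [NormedSpace ℝ F] [FiniteDimensional ℝ F]
variable {N : ℕ}

lemma W_formula (Φ : Fin N → F) (c : Fin N → ℝ) (a : F →ₗ[ℝ] ℝ)
    (ha : ∀ i, 0 < a (Φ i)) {lam : F} (hreg : IsRegular Φ lam)
    (hgen : GenericC Φ lam c) (B : Finset (Fin N)) :
    ∑ I ∈ Finset.univ.filter
        (fun I => (∃ J, (IsBasic Φ J ∧ lam ∈ coneOf Φ ↑J) ∧ J ⊆ I) ∧ B ⊆ I),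
      (-1:ℤ)^I.card
    = ∑ J ∈ Finset.univ.filter (fun J => IsBasic Φ J ∧ lam ∈ coneOf Φ ↑J),
        (if J ∪ Finset.univ.filter (fun k => k ∉ J ∧ 0 < Rcost Φ c J k) = J ∪ B
          then (-1:ℤ)^((J ∪ B).card) else 0) := by
  classical
  set Aset : Finset (Fin N) → Finset (Fin N) :=
    fun J => Finset.univ.filter (fun k => k ∉ J ∧ 0 < Rcost Φ c J k) with hAset
  set S : Finset (Finset (Fin N)) := Finset.univ.filter
    (fun I => (∃ J, (IsBasic Φ J ∧ lam ∈ coneOf Φ ↑J) ∧ J ⊆ I) ∧ B ⊆ I) with hSdef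
  have hEU : ∀ I : Finset (Fin N),
      (∃ J, (IsBasic Φ J ∧ lam ∈ coneOf Φ ↑J) ∧ J ⊆ I) →
      ∃! J, ((IsBasic Φ J ∧ lam ∈ coneOf Φ ↑J) ∧ J ⊆ I) ∧
        ∀ k ∈ I, k ∉ J → 0 < Rcost Φ c J k :=
    fun I hne => exists_unique_posbasis Φ c a ha hreg hgen hne
  set Jsel : Finset (Fin N) → Finset (Fin N) := fun I =>
    if h : ∃ J, (IsBasic Φ J ∧ lam ∈ coneOf Φ ↑J) ∧ J ⊆ I then (hEU I h).choose
    else ∅ with hJsel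
  have hJsel_spec : ∀ I (h : ∃ J, (IsBasic Φ J ∧ lam ∈ coneOf Φ ↑J) ∧ J ⊆ I),
      ((IsBasic Φ (Jsel I) ∧ lam ∈ coneOf Φ ↑(Jsel I)) ∧ Jsel I ⊆ I) ∧
        ∀ k ∈ I, k ∉ Jsel I → 0 < Rcost Φ c (Jsel I) k := by
    intro I h
    have : Jsel I = (hEU I h).choose := by rw [hJsel]; simp only [dif_pos h]
    rw [this]
    exact (hEU I h).choose_spec.1
  have hJsel_unique : ∀ I (h : ∃ J, (IsBasic Φ J ∧ lam ∈ coneOf Φ ↑J) ∧ J ⊆ I)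
      (J : Finset (Fin N)),
      (((IsBasic Φ J ∧ lam ∈ coneOf Φ ↑J) ∧ J ⊆ I) ∧
        ∀ k ∈ I, k ∉ J → 0 < Rcost Φ c J k) → Jsel I = J := by
    intro I h J hJ
    have h1 : Jsel I = (hEU I h).choose := by rw [hJsel]; simp only [dif_pos h]
    rw [h1]
    exact ((hEU I h).choose_spec.2 J hJ).symm
  have hmaps : ∀ I ∈ S, Jsel I ∈ Finset.univ.filter
      (fun J => IsBasic Φ J ∧ lam ∈ coneOf Φ ↑J) := by
    intro I hI
    obtain ⟨-, hex, -⟩ := Finset.mem_filter.mp hI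
    obtain ⟨⟨hcapt, -⟩, -⟩ := hJsel_spec I hex
    exact Finset.mem_filter.mpr ⟨Finset.mem_univ _, hcapt⟩
  rw [← Finset.sum_fiberwise_of_maps_to hmaps (fun I => (-1:ℤ)^I.card)]
  refine Finset.sum_congr rfl (fun J hJ𝒥 => ?_)
  have hcaptJ : IsBasic Φ J ∧ lam ∈ coneOf Φ ↑J := (Finset.mem_filter.mp hJ𝒥).2
  have hfib : S.filter (fun I => Jsel I = J) = Finset.Icc (J ∪ B) (J ∪ Aset J) := by
    ext I
    rw [Finset.mem_filter, Finset.mem_Icc]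
    constructor
    · rintro ⟨hIS, hJI⟩
      obtain ⟨-, hex, hBI⟩ := Finset.mem_filter.mp hIS
      have hspec := hJsel_spec I hex
      rw [hJI] at hspec
      obtain ⟨⟨-, hJsubI⟩, hpos⟩ := hspec
      constructor
      · exact Finset.union_subset hJsubI hBI
      · intro k hk
        by_cases hkJ : k ∈ J
        · exact Finset.mem_union_left _ hkJ
        · refine Finset.mem_union_right _ ?_
          rw [hAset]
          exact Finset.mem_filter.mpr ⟨Finset.mem_univ _, hkJ, hpos k hk hkJ⟩
    · rintro ⟨h1, h2⟩
      have hJsubI : J ⊆ I := (Finset.subset_union_left).trans h1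
      have hBI : B ⊆ I := (Finset.subset_union_right).trans h1
      have hex : ∃ J', (IsBasic Φ J' ∧ lam ∈ coneOf Φ ↑J') ∧ J' ⊆ I :=
        ⟨J, hcaptJ, hJsubI⟩
      refine ⟨Finset.mem_filter.mpr ⟨Finset.mem_univ _, hex, hBI⟩, ?_⟩
      apply hJsel_unique I hex J
      refine ⟨⟨hcaptJ, hJsubI⟩, ?_⟩
      intro k hkI hkJ
      have hk2 := h2 hkI
      rcases Finset.mem_union.mp hk2 with h | h
      · exact absurd h hkJ
      · rw [hAset] at h
        exact (Finset.mem_filter.mp h).2.2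
  rw [hfib]
  by_cases hsub : J ∪ B ⊆ J ∪ Aset J
  · rw [sum_Icc_neg_one_pow hsub]
  · rw [Finset.Icc_eq_empty (fun hcon => hsub hcon), Finset.sum_empty, if_neg]
    intro hcon
    rw [hcon] at hsub
    exact hsub (subset_refl _)

end BGwork8
/-- Coefficients of `X(Φ,τ)` in the basis of quadrant monomials: the
coefficient of the empty set is `1`, the coefficient of the full set is
`(-1)^{N-r}`, and nonzero coefficients only occur for `B` with `c(Φ_flip^B)`
salient. -/
theorem quadrant_coefficients
    {F : Type*} [NormedAddCommGroup F] [NormedSpace ℝ F] [FiniteDimensional ℝ F]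
    {N : ℕ} (Φ : Fin N → F)
    (hne : ∀ i, Φ i ≠ 0)
    (hgen : Submodule.span ℝ (Set.range Φ) = ⊤)
    (hsal : ∃ a : F →ₗ[ℝ] ℝ, ∀ i, 0 < a (Φ i))
    (τ : Set F) (hτ : IsTope Φ τ) (hτc : τ ⊆ fullCone Φ)
    (z : Finset (Fin N) → ℤ)
    (hz : BGpoly Φ τ =
      ∑ B : Finset (Fin N),
        MvPolynomial.C (z B) *
          ((∏ i ∈ Bᶜ, X (Sum.inl i)) * ∏ i ∈ B, X (Sum.inr i))) :
    z ∅ = 1 ∧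
    z Finset.univ = (-1) ^ (N - Module.finrank ℝ F) ∧
    ∀ B, z B ≠ 0 → Salient (fullCone (flipSeq Φ B)) := by
  classical
  obtain ⟨a, ha⟩ := hsal
  obtain ⟨lam, hlamτ, hreg⟩ := tope_point hτ
  have hlamfull : lam ∈ coneOf Φ ↑(Finset.univ : Finset (Fin N)) := by
    have h := hτc hlamτ
    rw [fullCone] at h
    rwa [Finset.coe_univ]
  set r : ℕ := Module.finrank ℝ F with hr
  have hGens : ∀ I : Finset (Fin N), I ∈ Gens Φ τ ↔
      ∃ J, (IsBasic Φ J ∧ lam ∈ coneOf Φ ↑J) ∧ J ⊆ I :=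
    fun I => gens_iff hτ hgen hlamτ hreg I
  have hzB := z_extract Φ τ z hz
  have hsq : ((-1:ℤ)^r) * ((-1:ℤ)^r) = 1 := by
    rw [← pow_add]
    exact Even.neg_one_pow ⟨r, rfl⟩
  -- conversion of the exponent
  have hconv : ∀ B : Finset (Fin N),
      z B = (-1:ℤ)^r * ∑ I ∈ Finset.univ.filter
        (fun I => (∃ J, (IsBasic Φ J ∧ lam ∈ coneOf Φ ↑J) ∧ J ⊆ I) ∧ B ⊆ I),
          (-1:ℤ)^I.card := by
    intro B
    rw [hzB B]
    have hfeq : Finset.univ.filter (fun I => I ∈ Gens Φ τ ∧ B ⊆ I)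
        = Finset.univ.filter
          (fun I => (∃ J, (IsBasic Φ J ∧ lam ∈ coneOf Φ ↑J) ∧ J ⊆ I) ∧ B ⊆ I) := by
      refine Finset.filter_congr (fun I _ => ?_)
      rw [hGens I]
    rw [hfeq, Finset.mul_sum]
    refine Finset.sum_congr rfl (fun I hI => ?_)
    have hrle : r ≤ I.card := by
      obtain ⟨-, ⟨J, ⟨hJb, -⟩, hJI⟩, -⟩ := Finset.mem_filter.mp hI
      calc r = J.card := (card_of_isBasic hJb).symm
        _ ≤ I.card := Finset.card_le_card hJI
    have h1 : (-1:ℤ)^(I.card - r) * (-1:ℤ)^r = (-1:ℤ)^I.card := by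
      rw [← pow_add, Nat.sub_add_cancel hrle]
    rw [← h1, mul_comm ((-1:ℤ)^(I.card - r)) ((-1:ℤ)^r), ← mul_assoc, hsq, one_mul]
  -- Part 1 : z ∅ = 1
  have hne_univ : ∃ J, (IsBasic Φ J ∧ lam ∈ coneOf Φ ↑J) ∧
      J ⊆ (Finset.univ : Finset (Fin N)) := by
    obtain ⟨J, hJu, hJb, hJc⟩ := exists_capt_subset hreg hgen hlamfull
    exact ⟨J, ⟨hJb, hJc⟩, hJu⟩
  have hz_empty : z ∅ = 1 := by
    -- choose any generic c
    obtain ⟨c, -, hgenc⟩ := exists_generic Φ lam Set.univ isOpen_univ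
      ⟨0, Set.mem_univ 0⟩
    rw [hconv ∅, W_formula Φ c a ha hreg hgenc ∅]
    have hgenc' : GenericC Φ lam (-c) := GenericC_neg Φ lam c hgenc
    obtain ⟨J₀, ⟨⟨⟨hJ₀b, hJ₀c⟩, -⟩, hJ₀pos⟩, hJ₀uniq⟩ :=
      exists_unique_posbasis Φ (-c) a ha hreg hgenc' hne_univ
    have hsum : ∑ J ∈ Finset.univ.filter
        (fun J => IsBasic Φ J ∧ lam ∈ coneOf Φ ↑J),
        (if J ∪ Finset.univ.filter (fun k => k ∉ J ∧ 0 < Rcost Φ c J k)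
            = J ∪ (∅ : Finset (Fin N))
          then (-1:ℤ)^((J ∪ (∅ : Finset (Fin N))).card) else 0) = (-1:ℤ)^r := by
      rw [Finset.sum_eq_single J₀]
      · rw [if_pos, Finset.union_empty, card_of_isBasic hJ₀b]
        rw [Finset.union_empty]
        rw [Finset.union_eq_left]
        intro k hk
        obtain ⟨-, hkJ, hkpos⟩ := Finset.mem_filter.mp hk
        exfalso
        have h2 := hJ₀pos k (Finset.mem_univ k) hkJ
        rw [Rcost_neg_c] at h2
        linarith
      · intro J hJ𝒥 hne'
        obtain ⟨-, hJb, hJc⟩ := Finset.mem_filter.mp hJ𝒥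
        rw [if_neg]
        intro hcond
        rw [Finset.union_empty, Finset.union_eq_left] at hcond
        have hP : ((IsBasic Φ J ∧ lam ∈ coneOf Φ ↑J) ∧
            J ⊆ (Finset.univ : Finset (Fin N))) ∧
            ∀ k ∈ (Finset.univ : Finset (Fin N)), k ∉ J →
              0 < Rcost Φ (-c) J k := by
          refine ⟨⟨⟨hJb, hJc⟩, Finset.subset_univ _⟩, ?_⟩
          intro k _ hkJ
          have hnz := hgenc J hJb hJc k hkJ
          have hnpos : ¬ (0 < Rcost Φ c J k) := by
            intro hpos
            have : k ∈ J := hcond (Finset.mem_filter.mpr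
              ⟨Finset.mem_univ _, hkJ, hpos⟩)
            exact hkJ this
          rw [Rcost_neg_c]
          rcases lt_or_gt_of_ne hnz with h | h
          · linarith
          · exact absurd h hnpos
        exact absurd (hJ₀uniq J hP) hne'
      · intro hcon
        exact absurd (Finset.mem_filter.mpr ⟨Finset.mem_univ _, hJ₀b, hJ₀c⟩) hcon
    rw [hsum, hsq]
  -- Part 2 : z univ
  have hz_univ : z Finset.univ = (-1:ℤ)^(N - r) := by
    rw [hzB Finset.univ]
    have huniv_mem : (Finset.univ : Finset (Fin N)) ∈ Gens Φ τ := by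
      constructor
      · rw [Finset.coe_univ, Set.image_univ, hgen]
      · intro x hx
        have := hτc hx
        rwa [fullCone, ← Finset.coe_univ (α := Fin N)] at this
    have hfeq : Finset.univ.filter
        (fun I : Finset (Fin N) => I ∈ Gens Φ τ ∧ Finset.univ ⊆ I)
        = {Finset.univ} := by
      ext I
      rw [Finset.mem_filter, Finset.mem_singleton]
      constructor
      · rintro ⟨-, -, hsub⟩
        exact Finset.univ_subset_iff.mp hsub
      · rintro rfl
        exact ⟨Finset.mem_univ _, huniv_mem, subset_refl _⟩
    rw [hfeq, Finset.sum_singleton, Finset.card_univ, Fintype.card_fin]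
  -- Part 3 : salience
  have hz_sal : ∀ B, z B ≠ 0 → Salient (fullCone (flipSeq Φ B)) := by
    intro B hzne
    by_contra hns
    apply hzne
    rw [Salient] at hns
    push_neg at hns
    obtain ⟨v, hv1, hv2, hvne⟩ := hns
    obtain ⟨c₁, hc₁0, -, hc₁⟩ := hv1
    obtain ⟨c₂, hc₂0, -, hc₂⟩ := hv2
    set e : Fin N → ℝ := fun i => c₁ i + c₂ i with he
    have he0 : ∀ i, 0 ≤ e i := fun i => add_nonneg (hc₁0 i) (hc₂0 i)
    have hesum : ∑ i, e i • flipSeq Φ B i = 0 := by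
      have h1 : ∀ i, e i • flipSeq Φ B i
          = c₁ i • flipSeq Φ B i + c₂ i • flipSeq Φ B i := by
        intro i; rw [he]; rw [add_smul]
      rw [Finset.sum_congr rfl (fun i _ => h1 i), Finset.sum_add_distrib,
        ← hc₁, ← hc₂, add_neg_cancel]
    have hene : ∃ i, 0 < e i := by
      by_contra hcon
      push_neg at hcon
      apply hvne
      rw [hc₁]
      refine Finset.sum_eq_zero (fun i _ => ?_)
      have h1 : e i = 0 := le_antisymm (hcon i) (he0 i)
      have h2 : c₁ i = 0 := by
        have h1' : c₁ i + c₂ i = 0 := h1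
        have := hc₂0 i
        have := hc₁0 i
        linarith
      rw [h2, zero_smul]
    set d : Fin N → ℝ := fun i => if i ∈ B then -e i else e i with hd
    have hdsum : ∑ i, d i • Φ i = 0 := by
      rw [← hesum]
      refine Finset.sum_congr rfl (fun i _ => ?_)
      show (if i ∈ B then -e i else e i) • Φ i = e i • flipSeq Φ B i
      by_cases hiB : i ∈ B
      · have hflip : flipSeq Φ B i = -Φ i := if_pos hiB
        rw [if_pos hiB, hflip, neg_smul, smul_neg]
      · have hflip : flipSeq Φ B i = Φ i := if_neg hiB
        rw [if_neg hiB, hflip]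
    have hsum_pos : 0 < ∑ i, e i := by
      obtain ⟨i₀, hi₀⟩ := hene
      exact Finset.sum_pos' (fun i _ => he0 i) ⟨i₀, Finset.mem_univ _, hi₀⟩
    set U : Set (Fin N → ℝ) := {c | 0 < ∑ i, d i * c i} with hU
    have hUopen : IsOpen U := by
      have hcont : Continuous (fun c : Fin N → ℝ => ∑ i, d i * c i) := by
        refine continuous_finset_sum _ (fun i _ => ?_)
        exact continuous_const.mul (continuous_apply i)
      exact isOpen_lt continuous_const hcont
    have hUne : U.Nonempty := by
      refine ⟨fun i => if i ∈ B then (-1:ℝ) else 1, ?_⟩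
      show 0 < ∑ i, d i * (if i ∈ B then (-1:ℝ) else 1)
      have h1 : ∀ i, d i * (if i ∈ B then (-1:ℝ) else 1) = e i := by
        intro i
        show (if i ∈ B then -e i else e i) * (if i ∈ B then (-1:ℝ) else 1) = e i
        by_cases hiB : i ∈ B
        · rw [if_pos hiB, if_pos hiB]; ring
        · rw [if_neg hiB, if_neg hiB]; ring
      rw [Finset.sum_congr rfl (fun i _ => h1 i)]
      exact hsum_pos
    obtain ⟨c, hcU, hgenc⟩ := exists_generic Φ lam U hUopen hUne
    rw [hconv B, W_formula Φ c a ha hreg hgenc B]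
    rw [Finset.sum_eq_zero, mul_zero]
    intro J hJ𝒥
    obtain ⟨-, hJb, hJc⟩ := Finset.mem_filter.mp hJ𝒥
    rw [if_neg]
    intro hcond
    -- derive a contradiction with the choice of c
    have hkey : ∀ k, k ∉ J → ((0 < Rcost Φ c J k) ↔ k ∈ B) := by
      intro k hkJ
      constructor
      · intro hpos
        have hk1 : k ∈ J ∪ B := by
          rw [← hcond]
          exact Finset.mem_union_right _
            (Finset.mem_filter.mpr ⟨Finset.mem_univ _, hkJ, hpos⟩)
        rcases Finset.mem_union.mp hk1 with h | h
        · exact absurd h hkJ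
        · exact h
      · intro hkB
        have hk1 : k ∈ J ∪ Finset.univ.filter
            (fun k => k ∉ J ∧ 0 < Rcost Φ c J k) := by
          rw [hcond]
          exact Finset.mem_union_right _ hkB
        rcases Finset.mem_union.mp hk1 with h | h
        · exact absurd h hkJ
        · exact (Finset.mem_filter.mp h).2.2
    have hid := key_identity Φ c hJb (v := (0:F)) hdsum
    rw [map_zero, zero_add] at hid
    have hterms : ∀ i, d i * rcost Φ c hJb i ≤ 0 := by
      intro i
      by_cases hiJ : i ∈ J
      · rw [rcost_of_mem Φ c hJb hiJ, mul_zero]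
      · by_cases hiB : i ∈ B
        · have hpos : 0 < rcost Φ c hJb i := by
            have := (hkey i hiJ).mpr hiB
            rwa [Rcost_eq Φ c hJb] at this
          have hdi : d i ≤ 0 := by
            show (if i ∈ B then -e i else e i) ≤ 0
            rw [if_pos hiB]
            linarith [he0 i]
          exact mul_nonpos_of_nonpos_of_nonneg hdi (le_of_lt hpos)
        · have hneg : rcost Φ c hJb i < 0 := by
            have hnz := hgenc J hJb hJc i hiJ
            rw [Rcost_eq Φ c hJb] at hnz
            rcases lt_or_gt_of_ne hnz with h | h
            · exact h
            · exfalso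
              have := (hkey i hiJ).mp (by rwa [Rcost_eq Φ c hJb])
              exact hiB this
          have hdi : 0 ≤ d i := by
            show 0 ≤ (if i ∈ B then -e i else e i)
            rw [if_neg hiB]
            exact he0 i
          exact mul_nonpos_of_nonneg_of_nonpos hdi (le_of_lt hneg)
    have hle : ∑ i, d i * c i ≤ 0 := by
      rw [hid]
      exact Finset.sum_nonpos (fun i _ => hterms i)
    have hcU' : (0:ℝ) < ∑ i, d i * c i := hcU
    linarith
  exact ⟨hz_empty, hz_univ, hz_sal⟩
end AC
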